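/- arXiv:1202.5523 — 7 statements merged into one kernel-verified Lean document; each statement's English description precedes it below -/
import Mathlib

section
/- Let G be a finite quiver and let w be a walk on G. Then there exist no nontrivial walks a, b on G with w = a ⊙ b (i.e., w is irreducible for the nesting product) if and only if w is a simple path or a simple cycle of G. -/
/-- A walk on the quiver with vertex set `V` and edge relation `E`:
a nonempty list of vertices in which consecutive vertices are joined by edges. -/
structure QWalk (V : Type) (E : V → V → Prop) : Type where
  verts : List V
  ne : verts ≠ []
  chain : verts.Chain' E

namespace QWalk

variable {V : Type} {E : V → V → Prop}

/-- The initial vertex of a walk. -/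
def first (w : QWalk V E) : V := w.verts.head w.ne

/-- The final vertex of a walk. -/
def last (w : QWalk V E) : V := w.verts.getLast w.ne

/-- The length of a walk (its number of edges). -/
def len (w : QWalk V E) : ℕ := w.verts.length - 1

/-- A walk is trivial when it has length `0`. -/
def Trivial (w : QWalk V E) : Prop := w.len = 0

/-- A walk is a cycle when its initial and final vertices coincide. -/
def IsCycle (w : QWalk V E) : Prop := w.first = w.last

/-- A cycle off the vertex `β`. -/
def IsCycleOff (w : QWalk V E) (β : V) : Prop := w.IsCycle ∧ w.first = β

/-- A simple path: all vertices distinct (trivial walks included). -/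
def IsSimplePath (w : QWalk V E) : Prop := w.verts.Nodup

/-- A simple cycle: a cycle whose internal vertices are pairwise distinct and
different from the base vertex (trivial walks included). -/
def IsSimpleCycle (w : QWalk V E) : Prop := w.IsCycle ∧ w.verts.tail.Nodup

/-- `IsNest a b w` holds precisely when `(a, b)` is a canonical couple (so the nesting
product `a ⊙ b` is defined) and `w = a ⊙ b`: here `b` is a cycle off `β`, the vertex
sequence of `a` decomposes at the *last* occurrence of `β` as `A₁ ++ [β] ++ A₂`,
the couple is canonical (either `a` is also a cycle off `β`, or no vertex other than
`β` visited by `a` strictly before the last occurrence of `β` is visited by `b`),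
and `w` is obtained by replacing that last occurrence of `β` by the whole
vertex sequence of `b`. -/
def IsNest (a b w : QWalk V E) : Prop :=
  ∃ (β : V) (A₁ A₂ : List V),
    b.first = β ∧ b.last = β ∧
    a.verts = A₁ ++ β :: A₂ ∧ β ∉ A₂ ∧
    (a.IsCycleOff β ∨ ∀ v ∈ A₁, v ≠ β → v ∉ b.verts) ∧
    w.verts = A₁ ++ b.verts ++ A₂

/-- Nesting extended by the convention that nesting with a trivial walk acts as the
identity: `(μ) ⊙ w = w ⊙ (μ) = w` for any walk `w` visiting `μ`. -/
def IsNestE (a b w : QWalk V E) : Prop :=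
  IsNest a b w ∨ (a.Trivial ∧ a.first ∈ b.verts ∧ w = b)

end QWalk


section AuxNest
variable {V : Type} {E : V → V → Prop}

lemma getLast_congr {α : Type*} {l l' : List α} (h1 : l ≠ []) (h2 : l' ≠ [])
    (h : l = l') : l.getLast h1 = l'.getLast h2 := by subst h; rfl

/-- Split a list at the last occurrence of an element. -/
lemma splitLastAux {V : Type} {a : V} : ∀ {l : List V}, a ∈ l →
    ∃ s t : List V, l = s ++ a :: t ∧ a ∉ t := by
  intro l
  induction l with
  | nil => simp
  | cons x l ih =>
    intro h
    by_cases hx : a ∈ l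
    · obtain ⟨s, t, hst, hat⟩ := ih hx
      exact ⟨x :: s, t, by simp [hst], hat⟩
    · have hax : a = x := by
        rcases List.mem_cons.1 h with h | h
        · exact h
        · exact absurd h hx
      exact ⟨[], l, by simp [hax], hx⟩

/-- Key decomposition of a non-nodup list at the repeated vertex with
minimal first occurrence: every vertex before it occurs only once. -/
lemma keyDecompAux {V : Type} : ∀ {L : List V}, ¬ L.Nodup →
    ∃ (A₁ : List V) (β : V) (M₁ A₂ : List V),
      L = A₁ ++ β :: M₁ ++ β :: A₂ ∧ β ∉ A₂ ∧
      ∀ v ∈ A₁, v ∉ β :: M₁ ++ β :: A₂ := by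
  intro L
  induction L with
  | nil => intro h; exact absurd List.nodup_nil h
  | cons x T ih =>
    intro h
    by_cases hx : x ∈ T
    · obtain ⟨M₁, A₂, hT, hA₂⟩ := splitLastAux hx
      exact ⟨[], x, M₁, A₂, by simp [hT], hA₂, by simp⟩
    · have hT : ¬ T.Nodup := fun hn => h (List.nodup_cons.2 ⟨hx, hn⟩)
      obtain ⟨A₁, β, M₁, A₂, hL, hA₂, hdisj⟩ := ih hT
      refine ⟨x :: A₁, β, M₁, A₂, by simp [hL], hA₂, ?_⟩
      intro v hv
      rcases List.mem_cons.1 hv with rfl | hv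
      · rw [hL] at hx; exact fun hc => hx (by simp at hc ⊢; tauto)
      · exact hdisj v hv

/-- Build a nontrivial nest decomposition of a walk from a suitable
decomposition of its vertex list. -/
lemma mk_nest (w : QWalk V E) (A₁ M₁ A₂ : List V) (β : V)
    (hL : w.verts = A₁ ++ β :: M₁ ++ β :: A₂) (hβ : β ∉ A₂)
    (hcan : (A₁ ≠ [] ∧ A₁.head? = some β ∧ A₂ = []) ∨
      (∀ v ∈ A₁, v ≠ β → v ∉ β :: M₁ ++ [β]))
    (hne : A₁ ≠ [] ∨ A₂ ≠ []) :
    ∃ a b : QWalk V E, ¬ a.Trivial ∧ ¬ b.Trivial ∧ QWalk.IsNest a b w := by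
  have hc := w.chain
  rw [hL] at hc
  have hpre : (A₁ ++ [β]) <+: (A₁ ++ β :: M₁ ++ β :: A₂) := ⟨M₁ ++ β :: A₂, by simp⟩
  have hsuf : (β :: A₂) <:+ (A₁ ++ β :: M₁ ++ β :: A₂) := ⟨A₁ ++ β :: M₁, by simp⟩
  have c1 : (A₁ ++ [β]).Chain' E := hc.prefix hpre
  have c2 : (β :: A₂).Chain' E := hc.suffix hsuf
  have ca : (A₁ ++ β :: A₂).Chain' E := by
    have hsplit : (A₁ ++ [β]) ++ A₂ = A₁ ++ β :: A₂ := by simp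
    rw [← hsplit]
    refine List.isChain_append.2 ⟨c1, (List.isChain_cons.1 c2).2, ?_⟩
    intro x hx y hy
    have hx' : x = β := by simpa using hx.symm
    subst hx'
    exact (List.isChain_cons.1 c2).1 y hy
  have cb : (β :: M₁ ++ [β]).Chain' E := by
    refine hc.infix ⟨A₁, A₂, ?_⟩
    simp
  set a : QWalk V E := ⟨A₁ ++ β :: A₂, by simp, ca⟩ with ha
  set b : QWalk V E := ⟨β :: M₁ ++ [β], by simp, cb⟩ with hb
  have hbfirst : b.first = β := rfl
  have hblast : b.last = β := by
    show (β :: M₁ ++ [β]).getLast (by simp) = β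
    simp [List.getLast_concat]
  refine ⟨a, b, ?_, ?_, β, A₁, A₂, hbfirst, hblast, rfl, hβ, ?_, by rw [hL, hb]; simp⟩
  · show ¬ ((A₁ ++ β :: A₂).length - 1 = 0)
    simp only [List.length_append, List.length_cons]
    rcases hne with h | h
    · have := List.length_pos_iff.2 h; omega
    · have := List.length_pos_iff.2 h; omega
  · show ¬ ((β :: M₁ ++ [β]).length - 1 = 0)
    simp
  · rcases hcan with ⟨hA₁ne, hhead, rfl⟩ | hcan
    · left
      have hfirst : a.first = β := by
        show (A₁ ++ β :: ([] : List V)).head (by simp) = β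
        rw [List.head_append_of_ne_nil hA₁ne]
        have hh := List.head?_eq_head hA₁ne
        rw [hh] at hhead
        exact Option.some_injective _ hhead
      have hlast : a.last = β := by
        show (A₁ ++ [β]).getLast (by simp) = β
        exact List.getLast_concat
      exact ⟨hfirst.trans hlast.symm, hfirst⟩
    · right
      exact hcan

end AuxNest

/-- A walk `w` on a finite quiver is irreducible for the nesting
product (there are no nontrivial walks `a`, `b` with `w = a ⊙ b`) if and only if
`w` is a simple path or a simple cycle. -/
theorem stmt0 {V : Type} [Fintype V] (E : V → V → Prop) (w : QWalk V E) :
    (¬ ∃ a b : QWalk V E, ¬ a.Trivial ∧ ¬ b.Trivial ∧ QWalk.IsNest a b w) ↔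
      (w.IsSimplePath ∨ w.IsSimpleCycle) := by
  constructor
  · intro h
    by_contra hn
    push_neg at hn
    obtain ⟨hP, hQ⟩ := hn
    apply h
    have hnd : ¬ w.verts.Nodup := hP
    by_cases hcyc : w.IsCycle
    · -- w is a cycle but not a simple cycle
      have htail : ¬ w.verts.tail.Nodup := fun h' => hQ ⟨hcyc, h'⟩
      obtain ⟨c₀, T, hwv⟩ : ∃ c₀ T, w.verts = c₀ :: T := by
        cases hv : w.verts with
        | nil => exact absurd hv w.ne
        | cons x t => exact ⟨x, t, rfl⟩
      have hTnd : ¬ T.Nodup := by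
        have : w.verts.tail = T := by simp [hwv]
        rwa [this] at htail
      have hTne : T ≠ [] := fun h => hTnd (h ▸ List.nodup_nil)
      have hfirst : w.first = c₀ := by
        show w.verts.head w.ne = c₀
        simp [hwv]
      have hlastT : T.getLast hTne = c₀ := by
        have hl : w.last = T.getLast hTne := by
          show w.verts.getLast w.ne = T.getLast hTne
          rw [getLast_congr w.ne (by simp) hwv, List.getLast_cons hTne]
        rw [← hl, ← hcyc, hfirst]
      by_cases hc₀ : c₀ ∈ T.dropLast
      · -- sub-case A : base point recurs in the interior; use a cycle off c₀
        obtain ⟨P, Q, hPQ, hQc⟩ := splitLastAux hc₀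
        have hTeq : T = P ++ c₀ :: Q ++ [c₀] := by
          have h0 : T = T.dropLast ++ [T.getLast hTne] :=
            (List.dropLast_append_getLast hTne).symm
          rw [hPQ, hlastT] at h0
          exact h0.trans (by simp)
        refine mk_nest w (c₀ :: P) Q [] c₀ ?_ (by simp) (Or.inl ⟨by simp, rfl, rfl⟩)
          (Or.inl (by simp))
        rw [hwv, hTeq]
        simp
      · -- sub-case B : a repetition inside the tail
        obtain ⟨A₁', β, M₁, A₂, hTd, hA₂, hdisj⟩ := keyDecompAux hTnd
        refine mk_nest w (c₀ :: A₁') M₁ A₂ β ?_ hA₂ (Or.inr ?_) (Or.inl (by simp))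
        · rw [hwv, hTd]; simp
        · intro v hv hvβ
          rcases List.mem_cons.1 hv with rfl | hv
          · -- v = c₀
            have hA₂ne : A₂ ≠ [] := by
              intro hA₂nil
              apply hvβ
              rw [← hlastT]
              subst hA₂nil
              rw [getLast_congr hTne (l' := (A₁' ++ β :: M₁) ++ [β]) (by simp)
                (by simp [hTd])]
              exact List.getLast_concat
            have hMsub : T.dropLast = A₁' ++ β :: M₁ ++ β :: A₂.dropLast := by
              rw [hTd]
              rw [show A₁' ++ β :: M₁ ++ β :: A₂ = (A₁' ++ β :: M₁ ++ [β]) ++ A₂ by simp,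
                List.dropLast_append_of_ne_nil hA₂ne]
              simp
            intro hcm
            rcases List.mem_cons.1 hcm with h1 | h1
            · exact hvβ h1
            · rcases List.mem_append.1 h1 with h1 | h1
              · exact hc₀ (by rw [hMsub]; simp [h1])
              · exact hvβ (by simpa using h1)
          · -- v ∈ A₁'
            intro hcm
            apply hdisj v hv
            simp only [List.cons_append, List.mem_cons, List.mem_append] at hcm ⊢
            tauto
    · -- w is not a cycle
      obtain ⟨A₁, β, M₁, A₂, hLd, hA₂, hdisj⟩ := keyDecompAux hnd
      refine mk_nest w A₁ M₁ A₂ β hLd hA₂ (Or.inr ?_) ?_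
      · intro v hv _ hcm
        apply hdisj v hv
        simp only [List.mem_cons, List.mem_append] at hcm ⊢
        tauto
      · by_contra hc
        push_neg at hc
        obtain ⟨h1, h2⟩ := hc
        apply hcyc
        subst h1 h2
        simp only [List.nil_append] at hLd
        show w.verts.head w.ne = w.verts.getLast w.ne
        have hh : w.verts.head w.ne = β := by simp [hLd]
        have hl : w.verts.getLast w.ne = β := by
          rw [getLast_congr w.ne (l' := (β :: M₁) ++ [β]) (by simp) (by simp [hLd])]
          exact List.getLast_concat
        rw [hh, hl]
  · rintro h ⟨a, b, hat, hbt, β, A₁, A₂, hbf, hbl, hav, hβA₂, _, hwv⟩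
    obtain ⟨t, hbv, hβt⟩ : ∃ t, b.verts = β :: t ∧ β ∈ t := by
      cases hv : b.verts with
      | nil => exact absurd hv b.ne
      | cons x t =>
        have h1 : b.verts.head b.ne = x := by simp [hv]
        have hx : x = β := by rw [← h1]; exact hbf
        have htne : t ≠ [] := by
          intro ht
          apply hbt
          show b.verts.length - 1 = 0
          simp [hv, ht]
        refine ⟨t, by rw [hx], ?_⟩
        have h2 : b.verts.getLast b.ne = t.getLast htne := by
          rw [getLast_congr b.ne (by simp) hv, List.getLast_cons htne]
        have hβlast : β = t.getLast htne := by rw [← hbl]; exact h2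
        rw [hβlast]
        exact List.getLast_mem htne
    have hbnd : ¬ b.verts.Nodup := by
      rw [hbv]
      exact fun hnd => (List.nodup_cons.1 hnd).1 hβt
    rcases h with hsp | hsc
    · exact hbnd (hsp.sublist (hwv ▸ (List.infix_append A₁ b.verts A₂).sublist))
    · cases A₁ with
      | nil =>
        have hA₂ne : A₂ ≠ [] := by
          intro h2
          apply hat
          show a.verts.length - 1 = 0
          simp [hav, h2]
        apply hβA₂
        have hwv' : w.verts = β :: (t ++ A₂) := by rw [hwv, hbv]; simp
        have hwf : w.first = β := by
          show w.verts.head w.ne = β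
          simp [hwv']
        have hwl : w.last = A₂.getLast hA₂ne := by
          show w.verts.getLast w.ne = A₂.getLast hA₂ne
          rw [getLast_congr w.ne (l' := (β :: t) ++ A₂) (by simp) (by simp [hwv']),
            List.getLast_append_of_ne_nil _ hA₂ne]
        have : β = A₂.getLast hA₂ne := by rw [← hwf, hsc.1, hwl]
        rw [this]
        exact List.getLast_mem hA₂ne
      | cons x A₁' =>
        apply hbnd
        have htl : w.verts.tail = A₁' ++ b.verts ++ A₂ := by
          rw [hwv]
          simp
        exact hsc.2.sublist (htl ▸ (List.infix_append A₁' b.verts A₂).sublist)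
end

section
/- Every walk on a finite quiver G belongs to the smallest set of walks that contains all simple paths and all simple cycles of G and is closed under defined nesting products; that is, every walk on G can be obtained from simple paths and simple cycles by finitely many nesting products. -/

private lemma exists_last_split {α : Type*} {a : α} {l : List α} (h : a ∈ l) :
    ∃ s t, l = s ++ a :: t ∧ a ∉ t := by
  induction l with
  | nil => simp at h
  | cons b l ih =>
    by_cases hb : a ∈ l
    · obtain ⟨s, t, rfl, ht⟩ := ih hb
      exact ⟨b :: s, t, rfl, ht⟩
    · have : a = b := by rcases List.mem_cons.mp h with h | h; exact h; exact absurd h hb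
      subst this
      exact ⟨[], l, rfl, hb⟩

private lemma dup_decomp {α : Type*} {l : List α} (h : ¬ l.Nodup) :
    ∃ (P Q R : List α) (γ : α), l = P ++ γ :: Q ++ γ :: R ∧
      (∀ v ∈ P, v ∉ γ :: Q ++ γ :: R) ∧ γ ∉ R := by
  induction l with
  | nil => simp at h
  | cons x l ih =>
    by_cases hx : x ∈ l
    · obtain ⟨s, t, rfl, ht⟩ := exists_last_split hx
      exact ⟨[], s, t, x, by simp, by simp, ht⟩
    · have hl : ¬ l.Nodup := fun hn => h (List.nodup_cons.mpr ⟨hx, hn⟩)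
      obtain ⟨P, Q, R, γ, rfl, hP, hR⟩ := ih hl
      refine ⟨x :: P, Q, R, γ, rfl, ?_, hR⟩
      intro v hv
      rcases List.mem_cons.mp hv with rfl | hv
      · simp only [List.mem_append, List.mem_cons, not_or] at hx ⊢
        tauto
      · exact hP v hv

private lemma chain_splice {α : Type*} {E : α → α → Prop} {A C Q : List α} {γ : α}
    (h : (A ++ (γ :: Q ++ [γ]) ++ C).Chain' E) :
    (A ++ γ :: C).Chain' E ∧ (γ :: Q ++ [γ]).Chain' E := by
  unfold List.Chain' at h ⊢
  rw [List.isChain_append, List.isChain_append] at h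
  obtain ⟨⟨hA, hB, hAB⟩, hC, hBC⟩ := h
  refine ⟨?_, hB⟩
  rw [show A ++ γ :: C = A ++ [γ] ++ C by simp, List.isChain_append, List.isChain_append]
  refine ⟨⟨hA, by simp, ?_⟩, hC, ?_⟩
  · simpa using hAB
  · have hg : (A ++ (γ :: Q ++ [γ])).getLast? = some γ := by
      rw [show A ++ (γ :: Q ++ [γ]) = (A ++ (γ :: Q)) ++ [γ] by simp, List.getLast?_concat]
    intro x hx' y hy
    have hx2 : x = γ := by
      rw [List.getLast?_concat] at hx'
      exact (Option.some.inj hx').symm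
    subst hx2
    exact hBC _ hg y hy

private lemma first_eq_of_cons {V : Type} {E : V → V → Prop} {w : QWalk V E} {x : V} {t : List V}
    (h : w.verts = x :: t) : w.first = x := by
  have h1 : w.verts.head? = some x := by rw [h]; rfl
  have h2 : w.verts.head? = some (w.verts.head w.ne) := List.head?_eq_head w.ne
  exact Option.some.inj (h2.symm.trans h1)

private lemma last_eq_of_concat {V : Type} {E : V → V → Prop} {w : QWalk V E} {x : V} {l : List V}
    (h : w.verts = l ++ [x]) : w.last = x := by
  have h1 : w.verts.getLast? = some x := by rw [h, List.getLast?_concat]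
  have h2 : w.verts.getLast? = some (w.verts.getLast w.ne) := List.getLast?_eq_getLast w.ne
  exact Option.some.inj (h2.symm.trans h1)

private lemma nest_step {V : Type} {E : V → V → Prop} (w : QWalk V E) (A C Q : List V) (γ : V)
    (hw : w.verts = A ++ (γ :: Q ++ [γ]) ++ C)
    (hγC : γ ∉ C)
    (hcanon : (A.head? = some γ ∧ C = []) ∨ (∀ v ∈ A, v ∉ γ :: Q ++ [γ])) :
    ∃ a b : QWalk V E, a.verts = A ++ γ :: C ∧ b.verts = γ :: Q ++ [γ] ∧ QWalk.IsNest a b w := by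
  have hch := w.chain
  rw [hw] at hch
  obtain ⟨ha, hb⟩ := chain_splice hch
  refine ⟨⟨A ++ γ :: C, by simp, ha⟩, ⟨γ :: Q ++ [γ], by simp, hb⟩, rfl, rfl, ?_⟩
  refine ⟨γ, A, C, ?_, ?_, rfl, hγC, ?_, hw⟩
  · exact first_eq_of_cons rfl
  · exact last_eq_of_concat (l := γ :: Q) rfl
  · rcases hcanon with ⟨hA, hC⟩ | hA
    · left
      obtain ⟨A', rfl⟩ : ∃ A', A = γ :: A' := by
        cases A with
        | nil => simp at hA
        | cons y A' => exact ⟨A', by injection hA with h; rw [h]⟩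
      subst hC
      have hfirst : (⟨γ :: A' ++ γ :: [], by simp, ha⟩ : QWalk V E).first = γ :=
        first_eq_of_cons rfl
      have hlast : (⟨γ :: A' ++ γ :: [], by simp, ha⟩ : QWalk V E).last = γ :=
        last_eq_of_concat (l := γ :: A') rfl
      exact ⟨hfirst.trans hlast.symm, hfirst⟩
    · right
      intro v hv _
      exact hA v hv

/-- Every walk on a finite quiver belongs to every set of walks that
contains all simple paths and all simple cycles and is closed under defined nesting
products; i.e. every walk belongs to the smallest such set, so it is obtained from
simple paths and simple cycles by finitely many nesting products. -/
theorem stmt2 {V : Type} [Fintype V] (E : V → V → Prop) (w : QWalk V E)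
    (S : Set (QWalk V E))
    (hpath : ∀ p : QWalk V E, p.IsSimplePath → p ∈ S)
    (hcyc : ∀ c : QWalk V E, c.IsSimpleCycle → c ∈ S)
    (hclosed : ∀ a b u : QWalk V E, a ∈ S → b ∈ S → QWalk.IsNest a b u → u ∈ S) :
    w ∈ S := by
  suffices main : ∀ n (w : QWalk V E), w.verts.length = n → w ∈ S from main _ w rfl
  intro n
  induction n using Nat.strong_induction_on with
  | _ n ih =>
  intro w hlen
  by_cases hnd : w.verts.Nodup
  · exact hpath w hnd
  by_cases hfl : w.first = w.last
  · -- w is a cycle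
    obtain ⟨x, t, ht⟩ := List.exists_cons_of_ne_nil w.ne
    have htne : t ≠ [] := by
      intro h
      apply hnd
      rw [ht, h]
      simp
    have hwv : w.verts = (x :: t.dropLast) ++ [t.getLast htne] := by
      rw [ht]
      rw [List.cons_append]
      congr 1
      exact (List.dropLast_append_getLast htne).symm
    have hgl : t.getLast htne = x := by
      have h1 : w.last = t.getLast htne := last_eq_of_concat hwv
      have h2 : w.first = x := first_eq_of_cons ht
      rw [← h1, ← hfl, h2]
    rw [hgl] at hwv
    set t' := t.dropLast with ht'
    by_cases hx : x ∈ t'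
    · obtain ⟨M₁, M₂, hsplit⟩ := List.append_of_mem hx
      have hwv3 : w.verts = (x :: M₁) ++ (x :: M₂ ++ [x]) ++ [] := by
        rw [hwv, hsplit]; simp
      obtain ⟨a, b, hav, hbv, hnest⟩ :=
        nest_step w (x :: M₁) [] M₂ x hwv3 (by simp) (Or.inl ⟨rfl, rfl⟩)
      have hla : a.verts.length < n := by
        rw [← hlen, hav, hwv3]; simp
      have hlb : b.verts.length < n := by
        rw [← hlen, hbv, hwv3]; simp
      exact hclosed a b w (ih _ hla a rfl) (ih _ hlb b rfl) hnest
    · by_cases ht'nd : t'.Nodup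
      · refine hcyc w ⟨hfl, ?_⟩
        rw [hwv]
        simp [List.nodup_append, ht'nd, hx, List.disjoint_singleton]
        intro a ha h; exact hx (h ▸ ha)
      · obtain ⟨P, Q, R, γ, hPQ, hP, hR⟩ := dup_decomp ht'nd
        have hγt' : γ ∈ t' := by rw [hPQ]; simp
        have hγx : γ ≠ x := fun h => hx (h ▸ hγt')
        have hwv3 : w.verts = (x :: P) ++ (γ :: Q ++ [γ]) ++ (R ++ [x]) := by
          rw [hwv, hPQ]; simp
        have hcanon : ∀ v ∈ x :: P, v ∉ γ :: Q ++ [γ] := by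
          intro v hv hmem
          rcases List.mem_cons.mp hv with rfl | hv'
          · apply hx
            rw [hPQ]
            simp only [List.mem_append, List.mem_cons] at hmem ⊢
            tauto
          · apply hP v hv'
            simp only [List.mem_append, List.mem_cons] at hmem ⊢
            tauto
        obtain ⟨a, b, hav, hbv, hnest⟩ :=
          nest_step w (x :: P) (R ++ [x]) Q γ hwv3
            (by simp only [List.mem_append, List.mem_singleton]; rintro (h | h); exact hR h; exact hγx h)
            (Or.inr hcanon)
        have hla : a.verts.length < n := by
          rw [← hlen, hav, hwv3]; simp
        have hlb : b.verts.length < n := by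
          rw [← hlen, hbv, hwv3]; simp; omega
        exact hclosed a b w (ih _ hla a rfl) (ih _ hlb b rfl) hnest
  · -- w is open
    obtain ⟨P, Q, R, γ, hPQ, hP, hR⟩ := dup_decomp hnd
    have hwv3 : w.verts = P ++ (γ :: Q ++ [γ]) ++ R := by rw [hPQ]; simp
    have hcanon : ∀ v ∈ P, v ∉ γ :: Q ++ [γ] := by
      intro v hv hmem
      apply hP v hv
      simp only [List.mem_append, List.mem_cons] at hmem ⊢
      tauto
    obtain ⟨a, b, hav, hbv, hnest⟩ := nest_step w P R Q γ hwv3 hR (Or.inr hcanon)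
    have hPR : P ≠ [] ∨ R ≠ [] := by
      by_contra hcon
      push_neg at hcon
      obtain ⟨h1, h2⟩ := hcon
      apply hfl
      rw [h1, h2] at hwv3
      simp only [List.append_nil, List.nil_append] at hwv3
      have hf : w.first = γ := first_eq_of_cons hwv3
      have hl : w.last = γ := last_eq_of_concat (l := γ :: Q) hwv3
      rw [hf, hl]
    have hla : a.verts.length < n := by
      rw [← hlen, hav, hwv3]; simp
    have hlb : b.verts.length < n := by
      rw [← hlen, hbv, hwv3]
      rcases hPR with h | h
      · have := List.length_pos_iff.mpr h
        simp
        omega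
      · have := List.length_pos_iff.mpr h
        simp
        omega
    exact hclosed a b w (ih _ hla a rfl) (ih _ hlb b rfl) hnest
end

section
/- Unique factorization for walks on quivers: if two canonical factorizations evaluate to the same walk w on a finite quiver G, then their multisets of nontrivial leaves coincide; in other words, the multiset of nontrivial simple-path and simple-cycle factors appearing in any factorization of w into nesting products of simple paths and simple cycles is uniquely determined by w. -/
/-- A finite binary-tree expression whose leaves are walks. -/
inductive FTree (V : Type) (E : V → V → Prop) : Type where
  | leaf : QWalk V E → FTree V E
  | node : FTree V E → FTree V E → FTree V E

namespace FTree

variable {V : Type} {E : V → V → Prop}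

/-- The multiset of leaves of a factorization tree. -/
def leaves : FTree V E → Multiset (QWalk V E)
  | .leaf w => {w}
  | .node f g => leaves f + leaves g

/-- `Evals f w`: every nesting product occurring in the evaluation of the tree `f`
is defined, and `f` evaluates to the walk `w`. -/
inductive Evals : FTree V E → QWalk V E → Prop
  | leaf (w : QWalk V E) : Evals (.leaf w) w
  | node {f g : FTree V E} {a b w : QWalk V E} :
      Evals f a → Evals g b → QWalk.IsNest a b w → Evals (.node f g) w

end FTree

/-- A canonical factorization of a walk `w`: a finite binary-tree expression whose
leaves are simple paths or simple cycles, in which every nesting product occurring in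
its evaluation is defined, and which evaluates to `w`. -/
def IsCanonFact {V : Type} {E : V → V → Prop} (f : FTree V E) (w : QWalk V E) : Prop :=
  (∀ l ∈ f.leaves, l.IsSimplePath ∨ l.IsSimpleCycle) ∧ f.Evals w


namespace Stmt3Aux
variable {V : Type}
open scoped Classical

noncomputable def scanD (seen : List V) : List V → Multiset (List V)
  | [] => if 2 ≤ seen.length then {seen.reverse} else 0
  | x :: rest =>
    if x ∈ seen then
      {x :: (seen.takeWhile (· ≠ x)).reverse ++ [x]} + scanD (seen.dropWhile (· ≠ x)) rest
    else scanD (x :: seen) rest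

noncomputable def D (l : List V) : Multiset (List V) := scanD [] l

lemma tw_eq (x : V) : ∀ (A : List V), (∀ v ∈ A, v ≠ x) → ∀ B : List V,
    (A ++ x :: B).takeWhile (· ≠ x) = A ∧ (A ++ x :: B).dropWhile (· ≠ x) = x :: B := by
  intro A
  induction A with
  | nil => intro _ B; simp
  | cons a A ih =>
    intro h B
    have ha : a ≠ x := h a (by simp)
    obtain ⟨h1, h2⟩ := ih (fun v hv => h v (by simp [hv])) B
    have hpa : (fun v => decide (v ≠ x)) a = true := by simpa using ha
    refine ⟨?_, ?_⟩
    · rw [List.cons_append, List.takeWhile_cons, if_pos hpa, h1]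
    · rw [List.cons_append, List.dropWhile_cons, if_pos hpa, h2]

lemma scanD_skip : ∀ (L : List V) (seen rest : List V), L.Nodup → (∀ v ∈ L, v ∉ seen) →
    scanD seen (L ++ rest) = scanD (L.reverse ++ seen) rest := by
  intro L
  induction L with
  | nil => intro seen rest _ _; simp
  | cons x L ih =>
    intro seen rest hnd hdisj
    have hx : x ∉ seen := hdisj x (by simp)
    have : scanD seen (x :: (L ++ rest)) = scanD (x :: seen) (L ++ rest) := by
      rw [scanD]; simp [hx]
    rw [List.cons_append, this, ih (x :: seen) rest hnd.of_cons]
    · simp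
    · intro v hv
      simp only [List.mem_cons, not_or]
      exact ⟨fun e => (List.nodup_cons.mp hnd).1 (by rwa [e] at hv), hdisj v (by simp [hv])⟩

lemma D_nodup {l : List V} (h : l.Nodup) : D l = if 2 ≤ l.length then {l} else 0 := by
  have := scanD_skip l [] [] h (by simp)
  simp only [List.append_nil] at this
  rw [D, this, scanD]
  simp

lemma D_erase (P : List V) (x : V) (M R : List V) (h : (P ++ x :: M).Nodup) :
    D (P ++ x :: (M ++ x :: R)) = {x :: (M ++ [x])} + D (P ++ x :: R) := by
  have hx : x ∉ M := by
    have := List.Nodup.of_append_right h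
    exact (List.nodup_cons.mp this).1
  have h1 : D (P ++ x :: (M ++ x :: R)) = scanD ((P ++ x :: M).reverse) (x :: R) := by
    rw [D]
    have := scanD_skip (P ++ x :: M) [] (x :: R) h (by simp)
    simpa [List.append_assoc] using this
  have h2 : D (P ++ x :: R) = scanD (x :: P.reverse) R := by
    rw [D]
    have hnd : (P ++ [x]).Nodup := by
      have := h.sublist (by simp : (P ++ [x]).Sublist (P ++ x :: M))
      exact this
    have := scanD_skip (P ++ [x]) [] R hnd (by simp)
    simpa using this
  rw [h1, h2]
  have hrev : (P ++ x :: M).reverse = M.reverse ++ x :: P.reverse := by simp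
  have htw := tw_eq x M.reverse (by intro v hv e; rw [List.mem_reverse] at hv; exact hx (by rwa [e] at hv)) P.reverse
  rw [hrev, scanD, if_pos (by simp : x ∈ M.reverse ++ x :: P.reverse), htw.1, htw.2]
  simp

end Stmt3Aux

namespace Stmt3Aux
variable {V : Type}
open scoped Classical

lemma mem_of_getLast? {l : List V} {y : V} (h : l.getLast? = some y) : y ∈ l := by
  cases l with
  | nil => simp at h
  | cons a t =>
    rw [List.getLast?_eq_getLast (by simp : a :: t ≠ [])] at h
    have := List.getLast_mem (l := a :: t) (by simp)
    rwa [Option.some_inj.mp h] at this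

lemma getLast?_append_right {L R : List V} (h : R ≠ []) :
    (L ++ R).getLast? = R.getLast? := by
  rw [List.getLast?_append, List.getLast?_eq_getLast h]
  rfl

lemma mem_split_first {y : V} : ∀ {t : List V}, y ∈ t → ∃ M R, t = M ++ y :: R ∧ y ∉ M := by
  intro t
  induction t with
  | nil => simp
  | cons a t ih =>
    intro h
    by_cases hy : a = y
    · exact ⟨[], t, by rw [hy]; rfl, by simp⟩
    · have hyt : y ∈ t := by
        rcases List.mem_cons.mp h with h' | h'
        · exact absurd h'.symm hy
        · exact h'
      obtain ⟨M, R, h1, h2⟩ := ih hyt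
      exact ⟨a :: M, R, by rw [h1]; rfl, by
        simp only [List.mem_cons, not_or]
        exact ⟨fun e => hy e.symm, h2⟩⟩

lemma first_dup : ∀ (l : List V), ¬ l.Nodup →
    ∃ P x M R, l = P ++ x :: (M ++ x :: R) ∧ (P ++ x :: M).Nodup := by
  intro l
  induction l with
  | nil => intro h; exact absurd List.nodup_nil h
  | cons y t ih =>
    intro h
    by_cases ht : t.Nodup
    · have hy : y ∈ t := by
        by_contra hy
        exact h (List.nodup_cons.mpr ⟨hy, ht⟩)
      obtain ⟨M, R, h1, h2⟩ := mem_split_first hy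
      refine ⟨[], y, M, R, by rw [h1]; rfl, ?_⟩
      rw [h1] at ht
      simp only [List.nil_append, List.nodup_cons]
      exact ⟨h2, ht.sublist (by simp)⟩
    · obtain ⟨P, x, M, R, h1, h2⟩ := ih ht
      by_cases hy : y ∈ P ++ x :: M
      · obtain ⟨M', R', e1, e2⟩ := mem_split_first hy
        refine ⟨[], y, M', R' ++ x :: R, ?_, ?_⟩
        · rw [h1, show P ++ x :: (M ++ x :: R) = (P ++ x :: M) ++ x :: R by simp, e1]
          simp
        · simp only [List.nil_append, List.nodup_cons]
          refine ⟨e2, h2.sublist ?_⟩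
          rw [e1]
          exact List.sublist_append_left _ _
      · refine ⟨y :: P, x, M, R, by rw [h1]; rfl, ?_⟩
        rw [List.cons_append]
        exact List.nodup_cons.mpr ⟨hy, h2⟩

lemma head?_stable (P : List V) (x : V) (R R' : List V) :
    (P ++ x :: R).head? = (P ++ x :: R').head? := by
  cases P <;> simp

end Stmt3Aux

namespace Stmt3Aux
variable {V : Type}
open scoped Classical

lemma main_lemma : ∀ (n : ℕ) (A₁ B A₂ : List V) (β : V),
    (A₁ ++ B ++ A₂).length ≤ n →
    B.head? = some β → B.getLast? = some β → β ∉ A₂ →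
    ((A₂ = [] ∧ (A₁ = [] ∨ A₁.head? = some β)) ∨ ∀ v ∈ A₁, v ≠ β → v ∉ B) →
    D (A₁ ++ B ++ A₂) = D (A₁ ++ β :: A₂) + D B := by
  intro n
  induction n with
  | zero =>
    intro A₁ B A₂ β hlen hhead _ _ _
    cases B with
    | nil => simp at hhead
    | cons b B₀ => simp at hlen
  | succ n ih =>
    intro A₁ B A₂ β hlen hhead hlast hβA₂ hcan
    obtain ⟨B₀, rfl⟩ : ∃ B₀, B = β :: B₀ := by
      cases B with
      | nil => simp at hhead
      | cons b B₀ =>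
        simp only [List.head?_cons, Option.some_inj] at hhead
        exact ⟨B₀, by rw [hhead]⟩
    by_cases hB₀ : B₀ = []
    · subst hB₀
      have : D [β] = 0 := by rw [D_nodup (by simp)]; simp
      simp [this]
    · have hβB₀ : β ∈ B₀ := by
        rw [show (β :: B₀ : List V) = [β] ++ B₀ by rfl, getLast?_append_right hB₀] at hlast
        exact mem_of_getLast? hlast
      by_cases hA₁ : A₁.Nodup
      · rcases hcan with ⟨rfl, hA₁h⟩ | hcan
        · -- cycle case, A₂ = []
          rcases hA₁h with rfl | hA₁h
          · -- A₁ = []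
            have : D [β] = 0 := by rw [D_nodup (by simp)]; simp
            simp [this]
          · obtain ⟨A₁', rfl⟩ : ∃ A₁', A₁ = β :: A₁' := by
              cases A₁ with
              | nil => simp at hA₁h
              | cons a t =>
                simp only [List.head?_cons, Option.some_inj] at hA₁h
                exact ⟨t, by rw [hA₁h]⟩
            have hnd : (([] : List V) ++ β :: A₁').Nodup := by simpa using hA₁
            have e1 := D_erase [] β A₁' B₀ hnd
            have e2 := D_erase [] β A₁' [] hnd
            have hDβ : D [β] = 0 := by rw [D_nodup (by simp)]; simp
            simp only [List.nil_append] at e1 e2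
            rw [show β :: A₁' ++ β :: B₀ ++ [] = β :: (A₁' ++ β :: B₀) by simp, e1,
              show β :: A₁' ++ [β] = β :: (A₁' ++ β :: []) by simp, e2, hDβ]
            abel
        · by_cases hβA₁ : β ∈ A₁
          · -- case 1b-i
            obtain ⟨P, S, rfl, hβP⟩ := mem_split_first hβA₁
            have e1 := D_erase P β S (B₀ ++ A₂) hA₁
            have e2 := D_erase P β S A₂ hA₁
            have hlen' : (P ++ (β :: B₀) ++ A₂).length ≤ n := by
              simp only [List.length_append, List.length_cons] at hlen ⊢
              omega
            have hihcan : ∀ v ∈ P, v ≠ β → v ∉ (β :: B₀ : List V) :=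
              fun v hv => hcan v (by simp [hv])
            have e3 := ih P (β :: B₀) A₂ β hlen' hhead hlast hβA₂ (Or.inr hihcan)
            rw [show P ++ β :: S ++ (β :: B₀) ++ A₂ = P ++ β :: (S ++ β :: (B₀ ++ A₂)) by simp, e1,
              show P ++ β :: S ++ β :: A₂ = P ++ β :: (S ++ β :: A₂) by simp, e2,
              show P ++ β :: (B₀ ++ A₂) = P ++ (β :: B₀) ++ A₂ by simp, e3]
            abel
          · -- case 1b-ii : recurse on B
            have hBnd : ¬ (β :: B₀).Nodup := by
              simp only [List.nodup_cons, not_and]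
              intro h; exact absurd hβB₀ h
            obtain ⟨P, x, M, R, hBeq, hPxM⟩ := first_dup _ hBnd
            have hdisj : A₁.Disjoint (P ++ x :: M) := by
              intro v hvA hvB
              by_cases hvβ : v = β
              · exact hβA₁ (hvβ ▸ hvA)
              · refine hcan v hvA hvβ ?_
                rw [hBeq]
                have : (P ++ x :: M).Sublist (P ++ x :: (M ++ x :: R)) := by
                  refine List.Sublist.append_left ?_ P
                  exact List.cons_sublist_cons.mpr (List.sublist_append_left _ _)
                exact this.mem hvB
            have hnd2 : ((A₁ ++ P) ++ x :: M).Nodup := by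
              rw [List.append_assoc]
              exact hA₁.append hPxM hdisj
            have e1 := D_erase (A₁ ++ P) x M (R ++ A₂) hnd2
            have e2 := D_erase P x M R hPxM
            -- IH with B' = P ++ x :: R
            have hsub : (P ++ x :: R).Sublist (β :: B₀) := by
              rw [hBeq]
              exact List.Sublist.append_left ((List.sublist_append_right M (x :: R)).cons x) P
            have hhead' : (P ++ x :: R).head? = some β := by
              rw [head?_stable P x R (M ++ x :: R), ← hBeq]; exact hhead
            have hlast' : (P ++ x :: R).getLast? = some β := by
              cases R with
              | nil =>
                have : x = β := by
                  rw [hBeq, show P ++ x :: (M ++ x :: []) = (P ++ x :: M) ++ [x] by simp,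
                    List.getLast?_concat] at hlast
                  exact Option.some_inj.mp hlast
                rw [show P ++ x :: [] = P ++ [x] by rfl, List.getLast?_concat, this]
              | cons r R' =>
                rw [show P ++ x :: (r :: R') = (P ++ [x]) ++ (r :: R') by simp,
                  getLast?_append_right (by simp)]
                rw [hBeq, show P ++ x :: (M ++ x :: (r :: R')) = (P ++ x :: M ++ [x]) ++ (r :: R') by simp,
                  getLast?_append_right (by simp)] at hlast
                exact hlast
            have hlen' : (A₁ ++ (P ++ x :: R) ++ A₂).length ≤ n := by
              have := congrArg List.length hBeq
              simp only [List.length_append, List.length_cons] at hlen this ⊢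
              omega
            have hcan' : ∀ v ∈ A₁, v ≠ β → v ∉ (P ++ x :: R) :=
              fun v hv hvβ hvB => hcan v hv hvβ (hsub.mem hvB)
            have e3 := ih A₁ (P ++ x :: R) A₂ β hlen' hhead' hlast' hβA₂ (Or.inr hcan')
            rw [hBeq,
              show A₁ ++ (P ++ x :: (M ++ x :: R)) ++ A₂ = (A₁ ++ P) ++ x :: (M ++ x :: (R ++ A₂)) by simp,
              e1,
              show (A₁ ++ P) ++ x :: (R ++ A₂) = A₁ ++ (P ++ x :: R) ++ A₂ by simp, e3, e2]
            abel
      · -- A₁ not nodup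
        obtain ⟨P, x, M, R', hA₁eq, hPxM⟩ := first_dup A₁ hA₁
        have e1 := D_erase P x M (R' ++ (β :: B₀) ++ A₂) hPxM
        have e2 := D_erase P x M (R' ++ β :: A₂) hPxM
        have hlen' : ((P ++ x :: R') ++ (β :: B₀) ++ A₂).length ≤ n := by
          have := congrArg List.length hA₁eq
          simp only [List.length_append, List.length_cons] at hlen this ⊢
          omega
        have hsubA : (P ++ x :: R').Sublist A₁ := by
          rw [hA₁eq]
          exact List.Sublist.append_left ((List.sublist_append_right M (x :: R')).cons x) P
        have hcan' : ((A₂ = [] ∧ ((P ++ x :: R') = [] ∨ (P ++ x :: R').head? = some β)) ∨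
            ∀ v ∈ (P ++ x :: R'), v ≠ β → v ∉ (β :: B₀ : List V)) := by
          rcases hcan with ⟨rfl, hh⟩ | hcan
          · refine Or.inl ⟨rfl, Or.inr ?_⟩
            rcases hh with rfl | hh
            · simp at hA₁eq
            · rw [hA₁eq] at hh
              rw [head?_stable P x R' (M ++ x :: R')]
              exact hh
          · exact Or.inr (fun v hv => hcan v (hsubA.mem hv))
        have e3 := ih (P ++ x :: R') (β :: B₀) A₂ β hlen' hhead hlast hβA₂ hcan'
        rw [hA₁eq,
          show (P ++ x :: (M ++ x :: R')) ++ (β :: B₀) ++ A₂ = P ++ x :: (M ++ x :: (R' ++ (β :: B₀) ++ A₂)) by simp,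
          e1,
          show P ++ x :: (R' ++ (β :: B₀) ++ A₂) = (P ++ x :: R') ++ (β :: B₀) ++ A₂ by simp,
          e3,
          show (P ++ x :: (M ++ x :: R')) ++ β :: A₂ = P ++ x :: (M ++ x :: (R' ++ β :: A₂)) by simp,
          e2,
          show P ++ x :: (R' ++ β :: A₂) = (P ++ x :: R') ++ β :: A₂ by simp]
        abel

end Stmt3Aux

namespace Stmt3Aux
variable {V : Type}
open scoped Classical

lemma D_singleton (a : V) : D [a] = 0 := by rw [D_nodup (by simp)]; simp

lemma D_leaf' (l : List V) (hne : l ≠ []) (h : l.Nodup ∨ (l.head? = l.getLast? ∧ l.tail.Nodup)) :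
    D l = if l.length ≤ 1 then 0 else {l} := by
  rcases h with h | ⟨hc, ht⟩
  · rw [D_nodup h]
    by_cases h2 : 2 ≤ l.length
    · rw [if_pos h2, if_neg (by omega)]
    · rw [if_neg h2, if_pos (by omega)]
  · cases l with
    | nil => exact absurd rfl hne
    | cons a t =>
      cases ht2 : t with
      | nil => simp [D_singleton]
      | cons b t' =>
        subst ht2
        have htne : (b :: t') ≠ [] := by simp
        have hgl : (b :: t').getLast? = some a := by
          rw [show (a :: b :: t' : List V) = [a] ++ (b :: t') by rfl,
            getLast?_append_right htne] at hc
          simpa using hc.symm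
        have hgl' : (b :: t').getLast htne = a := by
          rw [List.getLast?_eq_getLast htne] at hgl
          exact Option.some_inj.mp hgl
        have hsplit : b :: t' = (b :: t').dropLast ++ [a] := by
          conv_lhs => rw [← List.dropLast_append_getLast htne]
          rw [hgl']
        set M := (b :: t').dropLast with hM
        have hnd : (b :: t').Nodup := by simpa using ht
        rw [hsplit] at hnd
        rw [List.nodup_append] at hnd
        have hndM : (([] : List V) ++ a :: M).Nodup := by
          simp only [List.nil_append, List.nodup_cons]
          exact ⟨fun hm => hnd.2.2 a hm a (by simp) rfl, hnd.1⟩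
        have e := D_erase [] a M [] hndM
        simp only [List.nil_append] at e
        rw [show (a :: b :: t' : List V) = a :: (M ++ a :: []) by rw [← hsplit],
          e, D_singleton]
        rw [if_neg (by simp : ¬ (a :: (M ++ a :: [])).length ≤ 1)]
        simp

variable {E : V → V → Prop}

lemma verts_injective : Function.Injective (QWalk.verts (V := V) (E := E)) := by
  intro a b h
  cases a; cases b
  simp only at h
  subst h
  rfl

lemma first_head? (w : QWalk V E) : w.verts.head? = some w.first := by
  rw [QWalk.first, List.head?_eq_head]

lemma last_getLast? (w : QWalk V E) : w.verts.getLast? = some w.last := by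
  rw [QWalk.last, List.getLast?_eq_getLast]

lemma trivial_iff (w : QWalk V E) : w.Trivial ↔ w.verts.length ≤ 1 := by
  rw [QWalk.Trivial, QWalk.len]
  omega

lemma D_leaf (l : QWalk V E) (h : l.IsSimplePath ∨ l.IsSimpleCycle) :
    D l.verts = if l.Trivial then 0 else {l.verts} := by
  have := D_leaf' l.verts l.ne (by
    rcases h with h | ⟨h1, h2⟩
    · exact Or.inl h
    · refine Or.inr ⟨?_, h2⟩
      rw [first_head?, last_getLast?, h1])
  rw [this]
  by_cases ht : l.Trivial
  · rw [if_pos ht, if_pos ((trivial_iff l).mp ht)]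
  · rw [if_neg ht, if_neg (fun hh => ht ((trivial_iff l).mpr hh))]

lemma tree_eval : ∀ (f : FTree V E) (w : QWalk V E), f.Evals w →
    (∀ l ∈ f.leaves, l.IsSimplePath ∨ l.IsSimpleCycle) →
    (f.leaves.filter (fun l => ¬ l.Trivial)).map QWalk.verts = D w.verts := by
  intro f w hev
  induction hev with
  | leaf u =>
    intro hl
    have h := hl u (by simp [FTree.leaves])
    rw [D_leaf u h]
    by_cases ht : u.Trivial
    · simp [FTree.leaves, Multiset.filter_singleton, ht]
    · simp [FTree.leaves, Multiset.filter_singleton, ht]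
  | @node f g a b u hf hg hn ihf ihg =>
    intro hl
    have hlf : ∀ l ∈ f.leaves, l.IsSimplePath ∨ l.IsSimpleCycle := by
      intro l hml; exact hl l (by simp [FTree.leaves, hml])
    have hlg : ∀ l ∈ g.leaves, l.IsSimplePath ∨ l.IsSimpleCycle := by
      intro l hml; exact hl l (by simp [FTree.leaves, hml])
    obtain ⟨β, A₁, A₂, hbf, hbl, haeq, hβA₂, hcan, hweq⟩ := hn
    have hbh : b.verts.head? = some β := by rw [first_head?, hbf]
    have hbg : b.verts.getLast? = some β := by rw [last_getLast?, hbl]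
    have hcan' : ((A₂ = [] ∧ (A₁ = [] ∨ A₁.head? = some β)) ∨
        ∀ v ∈ A₁, v ≠ β → v ∉ b.verts) := by
      rcases hcan with ⟨hcyc, hfirst⟩ | h
      · left
        have hlasta : a.verts.getLast? = some β := by
          rw [last_getLast?, ← hcyc, hfirst]
        have hA₂ : A₂ = [] := by
          by_contra hA₂
          rw [haeq, show A₁ ++ β :: A₂ = (A₁ ++ [β]) ++ A₂ by simp,
            getLast?_append_right hA₂] at hlasta
          exact hβA₂ (mem_of_getLast? hlasta)
        refine ⟨hA₂, ?_⟩
        cases hA₁ : A₁ with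
        | nil => exact Or.inl rfl
        | cons a₁ t₁ =>
          right
          have : a.verts.head? = some β := by rw [first_head?, hfirst]
          rw [haeq, hA₁] at this
          simpa using this
      · exact Or.inr h
    have key := main_lemma (A₁ ++ b.verts ++ A₂).length A₁ b.verts A₂ β le_rfl
      hbh hbg hβA₂ hcan'
    rw [show FTree.leaves (.node f g) = f.leaves + g.leaves from rfl,
      Multiset.filter_add, Multiset.map_add, ihf hlf, ihg hlg, hweq, key, ← haeq]

end Stmt3Aux

open scoped Classical in
/-- Unique factorization for walks on finite quivers: any two
canonical factorizations of the same walk `w` have the same multiset of nontrivial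
leaves. -/
theorem stmt3 {V : Type} [Fintype V] (E : V → V → Prop) (w : QWalk V E)
    (f g : FTree V E) (hf : IsCanonFact f w) (hg : IsCanonFact g w) :
    f.leaves.filter (fun l => ¬ l.Trivial) = g.leaves.filter (fun l => ¬ l.Trivial) := by
  obtain ⟨hf1, hf2⟩ := hf
  obtain ⟨hg1, hg2⟩ := hg
  have h1 := Stmt3Aux.tree_eval f w hf2 hf1
  have h2 := Stmt3Aux.tree_eval g w hg2 hg1
  exact Multiset.map_injective Stmt3Aux.verts_injective (h1.trans h2.symm)
end

section
/- Let G be a finite quiver and let w be a walk on G that is neither a simple path nor a simple cycle, and which is either open or a cycle whose base vertex does not occur as an internal vertex. Let η be the earliest repeated vertex of w (the vertex occurring at least twice in w whose first occurrence is earliest, where for a cycle only the occurrences at positions 1, …, n of its vertex sequence are considered). Let s be the portion of w joining the first occurrence of η to the last occurrence of η, and let w′ be the walk obtained from w by replacing s with the single vertex η. Then s is a nontrivial cycle off η, w′ is a nontrivial walk, 1 ≤ ℓ(w′) < ℓ(w) and 1 ≤ ℓ(s) < ℓ(w), the couple (w′, s) is canonical, and w = w′ ⊙ s. -/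
private lemma aux_rep {V : Type} [DecidableEq V] {η v : V} {Q M S : List V}
    (hη : η ∉ Q) (hvQ : v ∈ Q) (hvM : v ∈ M)
    (hear : 2 ≤ (Q ++ M ++ S).count v → (Q ++ M ++ S).idxOf η ≤ (Q ++ M ++ S).idxOf v) :
    False := by
  have h1 : 0 < Q.count v := List.count_pos_iff.mpr hvQ
  have h2 : 0 < M.count v := List.count_pos_iff.mpr hvM
  have hc : 2 ≤ (Q ++ M ++ S).count v := by
    simp only [List.count_append]; omega
  have h3 := hear hc
  have h4 : (Q ++ M ++ S).idxOf v < Q.length := by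
    rw [List.append_assoc, List.idxOf_append_of_mem hvQ]
    exact List.idxOf_lt_length_iff.mpr hvQ
  have h5 : Q.length ≤ (Q ++ M ++ S).idxOf η := by
    rw [List.append_assoc, List.idxOf_append_of_notMem hη]
    omega
  omega

private lemma mem_dropLast_of_ne_getLast {V : Type} {v : V} {M : List V} (hM : M ≠ [])
    (hvM : v ∈ M) (hne : v ≠ M.getLast hM) : v ∈ M.dropLast := by
  have h := List.dropLast_append_getLast hM
  rw [← h] at hvM
  rcases List.mem_append.mp hvM with h' | h'
  · exact h'
  · simp at h'; exact absurd h' hne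

/-- The extraction step of the factorization algorithm: let `w` be a
walk which is neither a simple path nor a simple cycle, and which is open or a cycle
whose base vertex is not internal.  Let `η` be the earliest repeated vertex of `w`
(occurrences counted in the full vertex sequence if `w` is open, and in its tail if
`w` is a cycle), let `M` be the portion of `w` joining the first occurrence of `η` to
the last occurrence of `η`, and let `w'` be obtained from `w` by replacing `M` with the
single vertex `η`.  Then `M` carries a nontrivial cycle `s` off `η`, `w'` is a
nontrivial walk, `1 ≤ ℓ(w') < ℓ(w)`, `1 ≤ ℓ(s) < ℓ(w)`, the couple `(w', s)` is
canonical, and `w = w' ⊙ s`. -/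
theorem stmt5 {V : Type} [Fintype V] [DecidableEq V] (E : V → V → Prop)
    (w : QWalk V E)
    (hnsp : ¬ w.IsSimplePath) (hnsc : ¬ w.IsSimpleCycle)
    (hshape : ¬ w.IsCycle ∨ w.first ∉ w.verts.tail.dropLast)
    (η : V) (K : List V)
    (hK : (¬ w.IsCycle ∧ K = w.verts) ∨ (w.IsCycle ∧ K = w.verts.tail))
    (hrep : 2 ≤ K.count η)
    (hearliest : ∀ v : V, 2 ≤ K.count v → K.idxOf η ≤ K.idxOf v)
    (P M S : List V)
    (hsplit : w.verts = P ++ M ++ S)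
    (hP : η ∉ P) (hS : η ∉ S)
    (hMh : M.head? = some η) (hMl : M.getLast? = some η) :
    ∃ s w' : QWalk V E,
      s.verts = M ∧ w'.verts = P ++ η :: S ∧
      s.IsCycleOff η ∧ ¬ s.Trivial ∧ ¬ w'.Trivial ∧
      1 ≤ w'.len ∧ w'.len < w.len ∧ 1 ≤ s.len ∧ s.len < w.len ∧
      QWalk.IsNest w' s w := by
  
  have hMne : M ≠ [] := by rintro rfl; simp at hMh
  have hMhead : M.head hMne = η := by
    have h1 := List.head?_eq_head hMne
    rw [hMh] at h1
    exact (Option.some.inj h1).symm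
  have hMlastv : M.getLast hMne = η := by
    have h1 := List.getLast?_eq_getLast hMne
    rw [hMl] at h1
    exact (Option.some.inj h1).symm
  -- chain facts
  have hwchain : (P ++ (M ++ S)).Chain' E := by
    have h := w.chain
    rw [hsplit, List.append_assoc] at h
    exact h
  obtain ⟨cP, cMS, link1⟩ := List.isChain_append.mp hwchain
  obtain ⟨cM, cS, link2⟩ := List.isChain_append.mp cMS
  have cw' : (P ++ η :: S).Chain' E := by
    rw [show (P ++ η :: S).Chain' E ↔ List.IsChain E (P ++ η :: S) from Iff.rfl, List.isChain_append]
    refine ⟨cP, ?_, ?_⟩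
    · rw [List.isChain_cons]
      exact ⟨fun y hy => link2 η (Option.mem_def.mpr hMl) y hy, cS⟩
    · intro x hx y hy
      simp only [List.head?_cons, Option.mem_def, Option.some.injEq] at hy
      subst hy
      exact link1 x hx η (Option.mem_def.mpr
        (by rw [List.head?_append_of_ne_nil M hMne]; exact hMh))
  -- M has length at least 2
  have hM2 : 2 ≤ M.length := by
    by_contra h
    push_neg at h
    have h1 : M.length = 1 := by
      have := List.length_pos_iff.mpr hMne; omega
    obtain ⟨a, rfl⟩ := List.length_eq_one_iff.mp h1
    have ha : a = η := by simpa using hMh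
    subst ha
    have hcount : w.verts.count a = 1 := by
      rw [hsplit]
      simp [List.count_append, List.count_eq_zero.mpr hP, List.count_eq_zero.mpr hS]
    have hKle : K.count a ≤ 1 := by
      rcases hK with ⟨_, rfl⟩ | ⟨_, rfl⟩
      · omega
      · have := (List.tail_sublist w.verts).count_le a
        omega
    omega
  -- P and S are not both empty
  have hPS : 1 ≤ P.length + S.length := by
    by_contra h
    push_neg at h
    have hP0 : P = [] := List.length_eq_zero_iff.mp (by omega)
    have hS0 : S = [] := List.length_eq_zero_iff.mp (by omega)
    subst hP0; subst hS0
    simp only [List.nil_append, List.append_nil] at hsplit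
    have hfq : w.verts.head? = some η := by rw [hsplit]; exact hMh
    have hlq : w.verts.getLast? = some η := by rw [hsplit]; exact hMl
    have hfirst : w.first = η := by
      have h1 := List.head?_eq_head w.ne
      rw [hfq] at h1
      exact (Option.some.inj h1).symm
    have hlast : w.last = η := by
      have h1 := List.getLast?_eq_getLast w.ne
      rw [hlq] at h1
      exact (Option.some.inj h1).symm
    have hcyc : w.IsCycle := hfirst.trans hlast.symm
    rcases hK with ⟨hnc, _⟩ | ⟨_, rfl⟩
    · exact hnc hcyc
    · have hsh := hshape.resolve_left (not_not_intro hcyc)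
      have hKne : w.verts.tail ≠ [] := by
        intro h0
        rw [h0] at hrep; simp at hrep
      have hdec := List.dropLast_append_getLast hKne
      have h2 : w.verts.tail.count η =
          (w.verts.tail.dropLast).count η + ([w.verts.tail.getLast hKne]).count η := by
        conv_lhs => rw [← hdec]
        rw [List.count_append]
      have h3 : ([w.verts.tail.getLast hKne]).count η ≤ 1 := by
        have := List.count_le_length (a := η) (l := [w.verts.tail.getLast hKne])
        simpa using this
      have hmem : η ∈ w.verts.tail.dropLast := List.count_pos_iff.mp (by omega)
      rw [hfirst] at hsh
      exact hsh hmem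
  have hwlen : w.verts.length = P.length + M.length + S.length := by
    rw [hsplit]; simp [List.length_append]; omega
  refine ⟨⟨M, hMne, cM⟩, ⟨P ++ η :: S, by simp, cw'⟩, rfl, rfl,
    ⟨hMhead.trans hMlastv.symm, hMhead⟩, ?_, ?_, ?_, ?_, ?_, ?_, ?_⟩
  · simp only [QWalk.Trivial, QWalk.len]
    omega
  · simp only [QWalk.Trivial, QWalk.len, List.length_append, List.length_cons]
    omega
  · simp only [QWalk.len, List.length_append, List.length_cons]
    omega
  · simp only [QWalk.len, List.length_append, List.length_cons]
    omega
  · simp only [QWalk.len]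
    omega
  · simp only [QWalk.len]
    omega
  · refine ⟨η, P, S, hMhead, hMlastv, rfl, hS, Or.inr ?_, hsplit⟩
    intro v hvP hvη hvM
    rcases hK with ⟨hnc, rfl⟩ | ⟨hcyc, rfl⟩
    · have he := hearliest v
      rw [hsplit] at he
      exact aux_rep hP hvP hvM he
    · have hPne : P ≠ [] := List.ne_nil_of_mem hvP
      have hKe : w.verts.tail = P.tail ++ M ++ S := by
        rw [hsplit, List.append_assoc, List.tail_append_of_ne_nil hPne, ← List.append_assoc]
      by_cases hvt : v ∈ P.tail
      · have he := hearliest v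
        rw [hKe] at he
        exact aux_rep (fun h0 => hP (List.mem_of_mem_tail h0)) hvt hvM he
      · have hvhead : v = P.head hPne := by
          have h0 := List.cons_head_tail hPne
          rw [← h0] at hvP
          rcases List.mem_cons.mp hvP with h' | h'
          · exact h'
          · exact absurd h' hvt
        have hfirst : w.first = v := by
          have h0 : w.verts.head? = some (P.head hPne) := by
            rw [hsplit, List.append_assoc, List.head?_append_of_ne_nil P hPne,
              List.head?_eq_head hPne]
          have h1 := List.head?_eq_head w.ne
          rw [h0] at h1
          rw [hvhead]
          exact (Option.some.inj h1).symm
        have hsh := hshape.resolve_left (not_not_intro hcyc)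
        rw [hfirst] at hsh
        apply hsh
        rw [hKe]
        rcases eq_or_ne S [] with rfl | hSne
        · rw [List.append_nil, List.dropLast_append_of_ne_nil hMne]
          exact List.mem_append.mpr (Or.inr
            (mem_dropLast_of_ne_getLast hMne hvM (fun h' => hvη (h'.trans hMlastv))))
        · rw [List.dropLast_append_of_ne_nil hSne]
          simp [hvM]
end

section
/- Let G be a finite quiver and let w be a walk from α to ω on G. Then there exist a unique simple path π = (ν0 ν1 ⋯ νp) of G with ν0 = α and νp = ω (the trivial path if α = ω), and unique cycles s0, s1, …, sp, where sj is a possibly trivial cycle off νj lying entirely in the deleted subquiver G ∖ {ν0, …, ν(j−1)}, such that w = (((π ⊙ sp) ⊙ s(p−1)) ⊙ ⋯ ) ⊙ s0, where every nesting by a nontrivial sj is a defined (canonical) nesting product and nesting by a trivial sj acts as the identity. -/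
namespace QWalk

/-- Left-folded extended nesting product along a list:
`LNestE a [b₁, …, bₖ] w` means `(((a ⊙ b₁) ⊙ b₂) ⊙ ⋯) ⊙ bₖ = w`, every nesting by a
nontrivial factor being a defined (canonical) nesting product and nesting by a trivial
factor acting as the identity. -/
inductive LNestE {V : Type} {E : V → V → Prop} :
    QWalk V E → List (QWalk V E) → QWalk V E → Prop
  | nil (a : QWalk V E) : LNestE a [] a
  | cons {a b u w : QWalk V E} {l : List (QWalk V E)} :
      IsNestE a b u → LNestE u l w → LNestE a (b :: l) w

end QWalk

namespace QWalk

variable {V : Type} {E : V → V → Prop}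

theorem ext' {a b : QWalk V E} (h : a.verts = b.verts) : a = b := by
  cases a; cases b; simpa using h

lemma first_mem (w : QWalk V E) : w.first ∈ w.verts := List.head_mem _

lemma head?_verts (w : QWalk V E) : w.verts.head? = some w.first :=
  List.head?_eq_head w.ne

lemma getLast?_verts (w : QWalk V E) : w.verts.getLast? = some w.last :=
  List.getLast?_eq_getLast w.ne

lemma length_pos (w : QWalk V E) : 0 < w.verts.length := List.length_pos_iff.mpr w.ne

lemma first_def (w : QWalk V E) : w.verts = w.first :: w.verts.tail :=
  (List.cons_head_tail w.ne).symm

lemma first_eq {w : QWalk V E} {x : V} {l : List V} (h : w.verts = x :: l) :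
    w.first = x := by
  have h1 := w.head?_verts
  rw [h] at h1
  simpa using h1.symm

lemma last_eq {w : QWalk V E} {x : V} {l : List V} (h : w.verts = l ++ [x]) :
    w.last = x := by
  have h1 := w.getLast?_verts
  rw [h, List.getLast?_concat] at h1
  exact (Option.some.inj h1).symm

lemma verts_eq_dropLast (w : QWalk V E) : w.verts = w.verts.dropLast ++ [w.last] :=
  (List.dropLast_append_getLast w.ne).symm

lemma trivial_verts {w : QWalk V E} (h : w.Trivial) : w.verts = [w.first] := by
  have hp := w.length_pos
  have hl : w.verts.length = 1 := by
    unfold QWalk.Trivial QWalk.len at h; omega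
  obtain ⟨a, ha⟩ := List.length_eq_one_iff.mp hl
  rw [ha, first_eq ha]

/-- Prepend a vertex to a walk along an edge. -/
def consW (x : V) (w : QWalk V E) (h : E x w.first) : QWalk V E :=
  ⟨x :: w.verts, by simp, by
    refine List.isChain_cons.mpr ⟨?_, w.chain⟩
    intro y hy
    have : y = w.first := by
      have := w.head?_verts
      rw [this] at hy
      simpa using hy.symm
    rwa [this]⟩

lemma consW_verts (x : V) (w : QWalk V E) (h : E x w.first) :
    (consW x w h).verts = x :: w.verts := rfl

lemma consW_first (x : V) (w : QWalk V E) (h : E x w.first) :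
    (consW x w h).first = x := rfl

lemma consW_last (x : V) (w : QWalk V E) (h : E x w.first) :
    (consW x w h).last = w.last := List.getLast_cons w.ne

end QWalk

namespace QWalk

variable {V : Type} {E : V → V → Prop}

lemma split_at_last {l : List V} {a : V} (h : a ∈ l) :
    ∃ D T, l = D ++ a :: T ∧ a ∉ T := by
  classical
  induction l with
  | nil => cases h
  | cons b l ih =>
    by_cases hm : a ∈ l
    · obtain ⟨D, T, h1, h2⟩ := ih hm
      exact ⟨b :: D, T, by rw [h1]; rfl, h2⟩
    · have hab : a = b := by
        rcases List.mem_cons.mp h with h' | h'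
        · exact h'
        · exact absurd h' hm
      exact ⟨[], l, by rw [hab]; rfl, hm⟩

lemma split_at_last_unique {a : V} : ∀ {D₁ D₂ T₁ T₂ : List V},
    D₁ ++ a :: T₁ = D₂ ++ a :: T₂ → a ∉ T₁ → a ∉ T₂ → D₁ = D₂ ∧ T₁ = T₂ := by
  intro D₁
  induction D₁ with
  | nil =>
    intro D₂ T₁ T₂ h h1 h2
    cases D₂ with
    | nil => simpa using h
    | cons d D₂' =>
      rw [List.nil_append, List.cons_append] at h
      injection h with e1 e2
      have : a ∈ T₁ := by
        rw [e2]; exact List.mem_append_right _ (List.mem_cons_self)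
      exact absurd this h1
  | cons d D₁' ih =>
    intro D₂ T₁ T₂ h h1 h2
    cases D₂ with
    | nil =>
      rw [List.cons_append, List.nil_append] at h
      injection h with e1 e2
      have : a ∈ T₂ := by
        rw [← e2]; exact List.mem_append_right _ (List.mem_cons_self)
      exact absurd this h2
    | cons e D₂' =>
      rw [List.cons_append, List.cons_append] at h
      injection h with e1 e2
      obtain ⟨hD, hT⟩ := ih e2 h1 h2
      exact ⟨by rw [e1, hD], hT⟩

lemma first_of_parts {a u : QWalk V E} {β : V} {A₁ A₂ B : List V}
    (hB : B ≠ []) (hh : B.head hB = β)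
    (ha : a.verts = A₁ ++ β :: A₂) (hu : u.verts = A₁ ++ B ++ A₂) :
    u.first = a.first := by
  cases A₁ with
  | nil =>
    have hB' : B = β :: B.tail := by rw [← hh]; exact (List.cons_head_tail hB).symm
    rw [first_eq (show a.verts = β :: A₂ by simpa using ha),
        first_eq (show u.verts = β :: (B.tail ++ A₂) by
          rw [hu, List.nil_append, hB']; simp)]
  | cons x A₁' =>
    rw [first_eq (show a.verts = x :: (A₁' ++ β :: A₂) by simpa using ha),
        first_eq (show u.verts = x :: (A₁' ++ B ++ A₂) by rw [hu]; simp)]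

lemma IsNest.first_eq {a b u : QWalk V E} (h : IsNest a b u) : u.first = a.first := by
  obtain ⟨β, A₁, A₂, h1, h2, h3, h4, h5, h6⟩ := h
  exact first_of_parts b.ne h1 h3 h6

/-- A "good" nest: the canonical couple certified by full disjointness of the
prefix from the cycle, or the trivial-walk convention with matching endpoints. -/
def GNest (a b u : QWalk V E) : Prop :=
  (∃ β A₁ A₂, b.first = β ∧ b.last = β ∧ a.verts = A₁ ++ β :: A₂ ∧ β ∉ A₂ ∧
    (∀ v ∈ A₁, v ∉ b.verts) ∧ u.verts = A₁ ++ b.verts ++ A₂)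
  ∨ (a.Trivial ∧ a.first = b.first ∧ b.last = b.first ∧ u = b)

lemma GNest.isNestE {a b u : QWalk V E} (h : GNest a b u) : IsNestE a b u := by
  rcases h with ⟨β, A₁, A₂, h1, h2, h3, h4, h5, h6⟩ | ⟨h1, h2, h3, h4⟩
  · exact Or.inl ⟨β, A₁, A₂, h1, h2, h3, h4, Or.inr (fun v hv _ => h5 v hv), h6⟩
  · exact Or.inr ⟨h1, by rw [h2]; exact b.first_mem, h4⟩

lemma GNest.first_eq {a b u : QWalk V E} (h : GNest a b u) : u.first = a.first := by
  rcases h with ⟨β, A₁, A₂, h1, h2, h3, h4, h5, h6⟩ | ⟨h1, h2, h3, h4⟩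
  · exact first_of_parts b.ne h1 h3 h6
  · rw [h4]; exact h2.symm

/-- Iterated good nesting. -/
inductive GLn : QWalk V E → List (QWalk V E) → QWalk V E → Prop
  | nil (a : QWalk V E) : GLn a [] a
  | cons {a b u w : QWalk V E} {l : List (QWalk V E)} :
      GNest a b u → GLn u l w → GLn a (b :: l) w

lemma GLn.first_eq {a u : QWalk V E} {l : List (QWalk V E)} (h : GLn a l u) :
    u.first = a.first := by
  induction h with
  | nil => rfl
  | cons hn _ ih => exact ih.trans hn.first_eq

lemma GLn.toLNestE {a u : QWalk V E} {l : List (QWalk V E)} (h : GLn a l u) :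
    LNestE a l u := by
  induction h with
  | nil => exact LNestE.nil _
  | cons hn _ ih => exact LNestE.cons hn.isNestE ih

lemma GLn.append {a u w b : QWalk V E} {l : List (QWalk V E)}
    (h : GLn a l u) (hb : GNest u b w) : GLn a (l ++ [b]) w := by
  induction h with
  | nil a => exact GLn.cons hb (GLn.nil _)
  | cons hn _ ih => exact GLn.cons hn (ih hb)

lemma GNest.lift {a b u : QWalk V E} {x : V} (h : GNest a b u) (hx : x ∉ b.verts)
    (ha : E x a.first) (hu : E x u.first) :
    GNest (consW x a ha) b (consW x u hu) := by
  rcases h with ⟨β, A₁, A₂, h1, h2, h3, h4, h5, h6⟩ | ⟨h1, h2, h3, h4⟩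
  · refine Or.inl ⟨β, x :: A₁, A₂, h1, h2, ?_, h4, ?_, ?_⟩
    · rw [consW_verts, h3]; rfl
    · intro v hv
      rcases List.mem_cons.mp hv with rfl | hv'
      · exact hx
      · exact h5 v hv'
    · rw [consW_verts, h6]; simp
  · refine Or.inl ⟨b.first, [x], [], rfl, h3, ?_, by simp, ?_, ?_⟩
    · rw [consW_verts, trivial_verts h1, h2]; rfl
    · intro v hv
      simp only [List.mem_singleton] at hv
      subst hv; exact hx
    · rw [consW_verts, h4]; simp

lemma GLn.lift {x : V} : ∀ {a u : QWalk V E} {l : List (QWalk V E)}, GLn a l u →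
    (∀ b ∈ l, x ∉ b.verts) → ∀ (ha : E x a.first) (hu : E x u.first),
    GLn (consW x a ha) l (consW x u hu) := by
  intro a u l h
  induction h with
  | nil a =>
    intro hx ha hu
    rw [show consW x a ha = consW x a hu from ext' rfl]
    exact GLn.nil _
  | @cons a b u₁ w l hn hl ih =>
    intro hx ha hu
    have h₁ : E x u₁.first := by rw [hn.first_eq]; exact ha
    exact GLn.cons (hn.lift (hx b (List.mem_cons_self)) ha h₁)
      (ih (fun b' hb' => hx b' (List.mem_cons_of_mem _ hb')) h₁ hu)

end QWalk

namespace QWalk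

variable {V : Type} {E : V → V → Prop}

lemma LNestE_append_singleton : ∀ {a w b : QWalk V E} {l : List (QWalk V E)},
    LNestE a (l ++ [b]) w → ∃ u, LNestE a l u ∧ IsNestE u b w := by
  intro a w b l
  induction l generalizing a with
  | nil =>
    intro h
    cases h with
    | cons hn hl =>
      cases hl
      exact ⟨a, LNestE.nil a, hn⟩
  | cons c l ih =>
    intro h
    cases h with
    | cons hn hl =>
      obtain ⟨u, h1, h2⟩ := ih hl
      exact ⟨u, LNestE.cons hn h1, h2⟩

lemma LNestE_first : ∀ {a u : QWalk V E} {l : List (QWalk V E)}, LNestE a l u →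
    (∀ b ∈ l, a.first ∈ b.verts → b.first = a.first) → u.first = a.first := by
  intro a u l h
  induction h with
  | nil a => intro _; rfl
  | @cons a b u₁ w l hn hl ih =>
    intro hc
    have h1 : u₁.first = a.first := by
      rcases hn with hn | ⟨ht, hm, heq⟩
      · exact hn.first_eq
      · rw [heq]; exact hc b (List.mem_cons_self) hm
    have h2 : ∀ b' ∈ l, u₁.first ∈ b'.verts → b'.first = u₁.first := by
      intro b' hb' hm'
      rw [h1] at hm' ⊢
      exact hc b' (List.mem_cons_of_mem _ hb') hm'
    exact (ih h2).trans h1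

lemma LNestE_inv : ∀ {a u : QWalk V E} {l : List (QWalk V E)}, LNestE a l u →
    ∀ {x : V} {R : List V}, a.verts = x :: R → x ∉ R → (∀ b ∈ l, x ∉ b.verts) →
    ∃ Y, u.verts = x :: Y ∧ x ∉ Y := by
  intro a u l h
  induction h with
  | nil a => intro x R h1 h2 _; exact ⟨R, h1, h2⟩
  | @cons a b u₁ w l hn hl ih =>
    intro x R h1 h2 h3
    have hxb : x ∉ b.verts := h3 b (List.mem_cons_self)
    have h3' : ∀ b' ∈ l, x ∉ b'.verts := fun b' hb' => h3 b' (List.mem_cons_of_mem _ hb')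
    rcases hn with ⟨β, A₁, A₂, hb1, hb2, ha, hβ, _, hu⟩ | ⟨ht, hm, rfl⟩
    · have hβx : β ≠ x := by
        rintro rfl
        exact hxb (hb1 ▸ b.first_mem)
      cases A₁ with
      | nil =>
        rw [h1, List.nil_append] at ha
        injection ha with e1 e2
        exact absurd e1.symm hβx
      | cons y A₁' =>
        rw [h1, List.cons_append] at ha
        injection ha with e1 e2
        subst e1
        have hx1 : x ∉ A₁' := fun hc => h2 (e2 ▸ List.mem_append_left _ hc)
        have hx2 : x ∉ A₂ := fun hc =>
          h2 (e2 ▸ List.mem_append_right _ (List.mem_cons_of_mem _ hc))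
        have hu' : u₁.verts = x :: (A₁' ++ b.verts ++ A₂) := by rw [hu]; simp
        have hxn : x ∉ A₁' ++ b.verts ++ A₂ := by
          intro hc
          rcases List.mem_append.mp hc with hc | hc
          · rcases List.mem_append.mp hc with hc | hc
            · exact hx1 hc
            · exact hxb hc
          · exact hx2 hc
        exact ih hu' hxn h3'
    · have h1' := trivial_verts ht
      rw [h1] at h1'
      injection h1' with e1 e2
      exact absurd (e1 ▸ hm) hxb

lemma LNestE_unlift : ∀ {a u : QWalk V E} {l : List (QWalk V E)}, LNestE a l u →
    ∀ {x : V} (a' : QWalk V E), a.verts = x :: a'.verts → (∀ b ∈ l, x ∉ b.verts) →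
    ∃ u' : QWalk V E, u.verts = x :: u'.verts ∧ LNestE a' l u' := by
  intro a u l h
  induction h with
  | nil a => intro x a' h1 _; exact ⟨a', h1, LNestE.nil a'⟩
  | @cons a b u₁ w l hn hl ih =>
    intro x a' h1 h2
    have hxb : x ∉ b.verts := h2 b (List.mem_cons_self)
    have h2' : ∀ b' ∈ l, x ∉ b'.verts := fun b' hb' => h2 b' (List.mem_cons_of_mem _ hb')
    rcases hn with ⟨β, A₁, A₂, hb1, hb2, ha, hβ, hcan, hu⟩ | ⟨ht, hm, rfl⟩
    · have hβx : β ≠ x := by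
        rintro rfl
        exact hxb (hb1 ▸ b.first_mem)
      cases A₁ with
      | nil =>
        rw [h1, List.nil_append] at ha
        injection ha with e1 e2
        exact absurd e1.symm hβx
      | cons y A₁' =>
        rw [h1, List.cons_append] at ha
        injection ha with e1 e2
        subst e1
        have hcan' : ∀ v ∈ A₁', v ≠ β → v ∉ b.verts := by
          rcases hcan with hcyc | hcan'
          · exact absurd (hcyc.2.symm.trans (first_eq h1)) hβx
          · exact fun v hv => hcan' v (List.mem_cons_of_mem _ hv)
        have huv : u₁.verts = x :: (A₁' ++ b.verts ++ A₂) := by rw [hu]; simp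
        have hne : A₁' ++ b.verts ++ A₂ ≠ [] := by simp [b.ne]
        have hch : List.Chain' E (A₁' ++ b.verts ++ A₂) := by
          have := u₁.chain
          rw [huv] at this
          exact this.tail
        obtain ⟨u', hu', hL⟩ := ih (⟨A₁' ++ b.verts ++ A₂, hne, hch⟩ : QWalk V E) huv h2'
        refine ⟨u', hu', LNestE.cons (Or.inl ⟨β, A₁', A₂, hb1, hb2, e2, hβ,
          Or.inr hcan', rfl⟩) hL⟩
    · have h1' := trivial_verts ht
      rw [h1] at h1'
      injection h1' with e1 e2
      exact absurd e2 a'.ne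

end QWalk

namespace QWalk

variable {V : Type} {E : V → V → Prop}

lemma exists_decomp : ∀ (n : ℕ) (w : QWalk V E), w.verts.length ≤ n →
    ∃ (π : QWalk V E) (ss : List (QWalk V E)),
      π.IsSimplePath ∧ π.first = w.first ∧ π.last = w.last ∧
      ss.length = π.verts.length ∧
      (∀ (j : ℕ) (s : QWalk V E) (ν : V), ss[j]? = some s → π.verts[j]? = some ν →
        s.IsCycleOff ν ∧ ∀ v ∈ s.verts, v ∉ π.verts.take j) ∧
      GLn π ss.reverse w ∧
      (∀ s ∈ ss, ∀ v ∈ s.verts, v ∈ w.verts) ∧ (∀ v ∈ π.verts, v ∈ w.verts) := by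
  intro n
  induction n with
  | zero => intro w hw; exact absurd w.length_pos (by omega)
  | succ n ih =>
    intro w hw
    obtain ⟨D, T, hL, hT⟩ := split_at_last w.first_mem
    have hL' : w.verts = (D ++ [w.first]) ++ T := by rw [hL]; simp
    have hchain := w.chain
    rw [hL'] at hchain
    obtain ⟨hcC, hcT, hedge⟩ := List.isChain_append.mp hchain
    have hCne : D ++ [w.first] ≠ [] := by simp
    set s₀ : QWalk V E := ⟨D ++ [w.first], hCne, hcC⟩ with hs₀def
    have hs₀v : s₀.verts = D ++ [w.first] := by rw [hs₀def]
    have hs₀l : s₀.last = w.first := last_eq hs₀v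
    have hs₀f : s₀.first = w.first := by
      have h1 := w.head?_verts
      rw [hL', List.head?_append_of_ne_nil _ hCne] at h1
      have h2 := s₀.head?_verts
      rw [hs₀v] at h2
      exact Option.some.inj (h2.symm.trans h1)
    have hs₀c : s₀.IsCycleOff w.first := ⟨hs₀f.trans hs₀l.symm, hs₀f⟩
    by_cases hTnil : T = []
    · subst hTnil
      have hwv : w.verts = s₀.verts := by rw [hL', hs₀v]; simp
      have hws : w = s₀ := ext' hwv
      have hπne : ([w.first] : List V) ≠ [] := by simp
      set π : QWalk V E := ⟨[w.first], hπne, List.isChain_singleton _⟩ with hπdef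
      have hπv : π.verts = [w.first] := by rw [hπdef]
      have hπf : π.first = w.first := first_eq hπv
      refine ⟨π, [s₀], ?_, hπf, ?_, ?_, ?_, ?_, ?_, ?_⟩
      · show π.verts.Nodup
        rw [hπv]
        exact List.nodup_singleton _
      · rw [hws]
        exact (last_eq (l := []) (by simp [hπv])).trans hs₀l.symm
      · rw [hπv]; rfl
      · intro j s ν hs hν
        rw [hπv] at hν
        cases j with
        | zero =>
          simp only [List.getElem?_cons_zero, Option.some.injEq] at hs hν
          subst hs; subst hν
          exact ⟨hs₀c, by simp⟩
        | succ j => simp at hs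
      · rw [List.reverse_singleton]
        refine GLn.cons (Or.inr ⟨?_, hπf.trans hs₀f.symm, hs₀l.trans hs₀f.symm, hws⟩)
          (GLn.nil _)
        rw [hπdef]; rfl
      · intro s hs v hv
        simp only [List.mem_singleton] at hs
        subst hs
        rw [hwv]; exact hv
      · intro v hv
        rw [hπv] at hv
        simp only [List.mem_singleton] at hv
        subst hv; exact w.first_mem
    · have hlenT : T.length ≤ n := by
        have hw2 := hw
        rw [hL'] at hw2
        simp at hw2
        omega
      set w' : QWalk V E := ⟨T, hTnil, hcT⟩ with hw'def
      have hw'v : w'.verts = T := by rw [hw'def]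
      obtain ⟨π', ss', h1, h2, h3, h4, h5, h6, h7, h8⟩ := ih w' (by rw [hw'v]; exact hlenT)
      have hedge' : E w.first w'.first := by
        refine hedge w.first ?_ w'.first ?_
        · rw [List.getLast?_concat]; rfl
        · rw [Option.mem_def, ← hw'v]
          exact w'.head?_verts
      have hE : E w.first π'.first := by rw [h2]; exact hedge'
      set π : QWalk V E := consW w.first π' hE with hπdef
      have hπv : π.verts = w.first :: π'.verts := by rw [hπdef, consW_verts]
      have hsub' : ∀ v ∈ π'.verts, v ∈ T := by
        intro v hv
        have := h8 v hv
        rwa [hw'v] at this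
      refine ⟨π, s₀ :: ss', ?_, ?_, ?_, ?_, ?_, ?_, ?_, ?_⟩
      · show π.verts.Nodup
        rw [hπv]
        exact List.nodup_cons.mpr ⟨fun hc => hT (hsub' _ hc), h1⟩
      · rw [hπdef, consW_first]
      · have e1 : w.verts.getLast? = T.getLast? := by
          rw [hL']; exact List.getLast?_append_of_ne_nil _ hTnil
        have e0 := w.getLast?_verts
        rw [e1] at e0
        have e2 : w'.last = w.last := by
          have e3 := w'.getLast?_verts
          rw [hw'v] at e3
          exact Option.some.inj (e3.symm.trans e0)
        rw [hπdef, consW_last, h3, e2]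
      · rw [hπv]; simp [h4]
      · intro j s ν hs hν
        rw [hπv] at hν
        cases j with
        | zero =>
          simp only [List.getElem?_cons_zero, Option.some.injEq] at hs hν
          subst hs; subst hν
          exact ⟨hs₀c, by simp⟩
        | succ j =>
          simp only [List.getElem?_cons_succ] at hs hν
          obtain ⟨hcyc, havoid⟩ := h5 j s ν hs hν
          refine ⟨hcyc, ?_⟩
          intro v hv
          rw [hπv, List.take_succ_cons]
          intro hmem
          have hsmem : s ∈ ss' := List.mem_of_getElem? hs
          rcases List.mem_cons.mp hmem with rfl | hmem'
          · have hvT := h7 s hsmem _ hv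
            rw [hw'v] at hvT
            exact hT hvT
          · exact havoid v hv hmem'
      · rw [List.reverse_cons]
        refine GLn.append (u := consW w.first w' hedge') ?_ ?_
        · have hliftcond : ∀ b ∈ ss'.reverse, w.first ∉ b.verts := by
            intro b hb hc
            rw [List.mem_reverse] at hb
            have := h7 b hb w.first hc
            rw [hw'v] at this
            exact hT this
          rw [hπdef]
          exact GLn.lift h6 hliftcond hE hedge'
        · refine Or.inl ⟨w.first, [], T, hs₀f, hs₀l, ?_, hT, by simp, ?_⟩
          · rw [consW_verts, hw'v]; rfl
          · rw [hL', hs₀v]; simp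
      · intro s hs v hv
        rcases List.mem_cons.mp hs with rfl | hs'
        · rw [hs₀v] at hv
          rw [hL']
          exact List.mem_append_left _ hv
        · have := h7 s hs' v hv
          rw [hw'v] at this
          rw [hL']
          exact List.mem_append_right _ this
      · intro v hv
        rw [hπv] at hv
        rcases List.mem_cons.mp hv with rfl | hv'
        · exact w.first_mem
        · have := hsub' v hv'
          rw [hL]
          exact List.mem_append_right _ (List.mem_cons_of_mem _ this)

end QWalk

namespace QWalk

variable {V : Type} {E : V → V → Prop}

lemma head_mem_take {l : List V} (h : l ≠ []) (k : ℕ) : l.head h ∈ l.take (k+1) := by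
  cases l with
  | nil => exact absurd rfl h
  | cons a l => simp [List.take_succ_cons]

/-- The defining property of the decomposition, relative to the walk `w` itself. -/
def Pred (w : QWalk V E) (t : QWalk V E × List (QWalk V E)) : Prop :=
  t.1.IsSimplePath ∧ t.1.first = w.first ∧ t.1.last = w.last ∧
  t.2.length = t.1.verts.length ∧
  (∀ (j : ℕ) (s : QWalk V E) (ν : V), t.2[j]? = some s → t.1.verts[j]? = some ν →
    s.IsCycleOff ν ∧ ∀ v ∈ s.verts, v ∉ t.1.verts.take j) ∧
  LNestE t.1 t.2.reverse w

lemma analyze {w : QWalk V E} {t : QWalk V E × List (QWalk V E)} (h : Pred w t) :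
    ∃ (s₀ : QWalk V E) (ss' : List (QWalk V E)) (R D Y : List V),
      t.1.verts = w.first :: R ∧ t.2 = s₀ :: ss' ∧
      s₀.verts = D ++ [w.first] ∧
      w.verts = D ++ w.first :: Y ∧ w.first ∉ Y ∧
      (R = [] ↔ Y = []) ∧ ss'.length = R.length ∧
      (R ≠ [] → ∃ (π' u' : QWalk V E), π'.verts = R ∧ u'.verts = Y ∧
        Pred u' (π', ss')) := by
  obtain ⟨hsimp, hfirst, hlast, hlen, hcond, hnest⟩ := h
  have hπv : t.1.verts = w.first :: t.1.verts.tail := by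
    rw [← hfirst]; exact t.1.first_def
  set R := t.1.verts.tail with hRdef
  have hαR : w.first ∉ R := by
    have hnd : t.1.verts.Nodup := hsimp
    rw [hπv] at hnd
    exact (List.nodup_cons.mp hnd).1
  cases hss : t.2 with
  | nil =>
    exfalso
    rw [hss] at hlen
    have := t.1.length_pos
    simp at hlen
    omega
  | cons s₀ ss' =>
    have hc0 : s₀.IsCycleOff w.first := by
      refine (hcond 0 s₀ w.first ?_ ?_).1
      · rw [hss]; simp
      · rw [hπv]; simp
    have hs₀l : s₀.last = w.first := by rw [← hc0.1]; exact hc0.2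
    have hs₀v : s₀.verts = s₀.verts.dropLast ++ [w.first] := by
      rw [← hs₀l]; exact s₀.verts_eq_dropLast
    have hlen' : ss'.length = R.length := by
      rw [hss] at hlen
      rw [hπv] at hlen
      simpa using hlen
    rw [hss, List.reverse_cons] at hnest
    obtain ⟨u₁, hL1, hN0⟩ := LNestE_append_singleton hnest
    have hss'avoid : ∀ b ∈ ss'.reverse, w.first ∉ b.verts := by
      intro b hb hmem
      rw [List.mem_reverse] at hb
      obtain ⟨j, hj, hbj⟩ := List.mem_iff_getElem.mp hb
      have hjlt : j + 1 < t.1.verts.length := by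
        rw [hπv]; simp; omega
      have hb? : ss'[j]? = some b := by
        rw [List.getElem?_eq_getElem hj, hbj]
      have hν? : t.1.verts[j+1]? = some (t.1.verts[j+1]'hjlt) :=
        List.getElem?_eq_getElem hjlt
      have hres := hcond (j+1) b _ (by rw [hss, List.getElem?_cons_succ]; exact hb?) hν?
      refine hres.2 w.first hmem ?_
      rw [hπv, List.take_succ_cons]
      exact List.mem_cons_self
    obtain ⟨Y, hu₁v, hαY⟩ := LNestE_inv hL1 hπv hαR hss'avoid
    have hwv : w.verts = s₀.verts ++ Y := by
      rcases hN0 with ⟨β, A₁, A₂, hb1, hb2, ha, hβ, _, hwv'⟩ | ⟨ht, hm, heq⟩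
      · have hβα : β = w.first := hb1.symm.trans hc0.2
        subst hβα
        have hsplit := split_at_last_unique (D₂ := []) (T₂ := Y)
          (by rw [← ha, hu₁v]; simp) hβ hαY
        rw [hwv', hsplit.1, hsplit.2]
        simp
      · have hY : Y = [] := by
          have h5 := trivial_verts ht
          rw [hu₁v] at h5
          injection h5 with e1 e2
        rw [heq, hY, List.append_nil]
    have hwv2 : w.verts = s₀.verts.dropLast ++ w.first :: Y := by
      rw [hwv]
      conv_lhs => rw [hs₀v]
      simp
    have hiff : R = [] ↔ Y = [] := by
      constructor
      · intro hR
        have hssnil : ss' = [] := List.length_eq_zero_iff.mp (by rw [hlen', hR]; rfl)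
        rw [hssnil, List.reverse_nil] at hL1
        cases hL1
        rw [hπv, hR] at hu₁v
        injection hu₁v with e1 e2
        exact e2.symm
      · intro hY
        by_contra hR
        have hcR : List.Chain' E R := by
          have := t.1.chain
          rw [hπv] at this
          exact this.tail
        obtain ⟨u', hu', _⟩ := LNestE_unlift hL1 (⟨R, hR, hcR⟩ : QWalk V E)
          (by rw [hπv]) hss'avoid
        rw [hu₁v, hY] at hu'
        injection hu' with e1 e2
        exact u'.ne e2.symm
    refine ⟨s₀, ss', R, s₀.verts.dropLast, Y, hπv, rfl, hs₀v, hwv2, hαY,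
      hiff, hlen', ?_⟩
    intro hR
    have hcR : List.Chain' E R := by
      have := t.1.chain
      rw [hπv] at this
      exact this.tail
    set π' : QWalk V E := ⟨R, hR, hcR⟩ with hπ'def
    have hπ'v : π'.verts = R := by rw [hπ'def]
    obtain ⟨u', hu'₁, hL'⟩ := LNestE_unlift hL1 π' (by rw [hπv, hπ'v]) hss'avoid
    have hu'Y : u'.verts = Y := by
      rw [hu₁v] at hu'₁
      injection hu'₁ with e1 e2
      exact e2.symm
    have hYne : Y ≠ [] := fun hh => hR (hiff.mpr hh)
    have hπ'f : π'.first = R.head hR := by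
      have := π'.head?_verts
      rw [hπ'v, List.head?_eq_head hR] at this
      exact (Option.some.inj this).symm
    refine ⟨π', u', hπ'v, hu'Y, ?_, ?_, ?_, ?_, ?_, hL'⟩
    · -- simple
      show π'.verts.Nodup
      rw [hπ'v]
      have hnd : t.1.verts.Nodup := hsimp
      rw [hπv] at hnd
      exact (List.nodup_cons.mp hnd).2
    · -- first
      refine (LNestE_first hL' ?_).symm
      intro b hb hmemb
      rw [List.mem_reverse] at hb
      obtain ⟨j, hj, hbj⟩ := List.mem_iff_getElem.mp hb
      have hb? : ss'[j]? = some b := by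
        rw [List.getElem?_eq_getElem hj, hbj]
      have hjlt : j + 1 < t.1.verts.length := by
        rw [hπv]; simp; omega
      cases j with
      | zero =>
        have hν1 : t.1.verts[1]? = some (R.head hR) := by
          rw [hπv, show (w.first::R)[1]? = R[0]? from List.getElem?_cons_succ,
            List.getElem?_eq_getElem (List.length_pos_iff.mpr hR), List.getElem_zero]
        have hres := hcond 1 b (R.head hR)
          (by rw [hss, List.getElem?_cons_succ]; exact hb?) hν1
        rw [hπ'f]
        exact hres.1.2
      | succ j =>
        exfalso
        have hν? : t.1.verts[j+2]? = some (t.1.verts[j+2]'hjlt) :=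
          List.getElem?_eq_getElem hjlt
        have hres := hcond (j+2) b _
          (by rw [hss, List.getElem?_cons_succ]; exact hb?) hν?
        refine hres.2 π'.first hmemb ?_
        rw [hπv, List.take_succ_cons, hπ'f]
        refine List.mem_cons_of_mem _ (head_mem_take hR _)
    · -- last
      have e1 : w.verts.getLast? = Y.getLast? := by
        rw [hwv]
        exact List.getLast?_append_of_ne_nil _ hYne
      have e0 := w.getLast?_verts
      rw [e1] at e0
      have eu : u'.last = w.last := by
        have := u'.getLast?_verts
        rw [hu'Y] at this
        exact Option.some.inj (this.symm.trans e0)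
      have eπ : π'.last = t.1.last := by
        have e2 : t.1.verts.getLast? = R.getLast? := by
          rw [hπv, show w.first :: R = [w.first] ++ R from rfl]
          exact List.getLast?_append_of_ne_nil _ hR
        have e3 := t.1.getLast?_verts
        rw [e2] at e3
        have e4 := π'.getLast?_verts
        rw [hπ'v] at e4
        exact Option.some.inj (e4.symm.trans e3)
      rw [eπ, hlast, eu]
    · -- lengths
      rw [hπ'v]; exact hlen'
    · -- index conditions
      intro j s ν hs hν
      rw [hπ'v] at hν
      have hres := hcond (j+1) s ν
        (by rw [hss, List.getElem?_cons_succ]; exact hs)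
        (by rw [hπv, List.getElem?_cons_succ]; exact hν)
      refine ⟨hres.1, ?_⟩
      intro v hv hmem
      refine hres.2 v hv ?_
      rw [hπv, List.take_succ_cons]
      refine List.mem_cons_of_mem _ ?_
      rw [hπ'v] at hmem
      exact hmem

end QWalk

namespace QWalk

variable {V : Type} {E : V → V → Prop}

lemma uniq_decomp : ∀ (n : ℕ) (w : QWalk V E), w.verts.length ≤ n →
    ∀ t₁ t₂ : QWalk V E × List (QWalk V E), Pred w t₁ → Pred w t₂ → t₁ = t₂ := by
  intro n
  induction n with
  | zero => intro w hw; exact absurd w.length_pos (by omega)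
  | succ n ih =>
    intro w hw t₁ t₂ h₁ h₂
    obtain ⟨s₁, ss₁, R₁, D₁, Y₁, e1, e2, e3, e4, e5, e6, e7, e8⟩ := analyze h₁
    obtain ⟨s₂, ss₂, R₂, D₂, Y₂, f1, f2, f3, f4, f5, f6, f7, f8⟩ := analyze h₂
    obtain ⟨hD, hY⟩ := split_at_last_unique (e4.symm.trans f4) e5 f5
    subst hD
    subst hY
    have hs : s₁ = s₂ := ext' (e3.trans f3.symm)
    by_cases hY0 : Y₁ = []
    · have hR₁ : R₁ = [] := e6.mpr hY0
      have hR₂ : R₂ = [] := f6.mpr hY0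
      have hss₁ : ss₁ = [] := List.length_eq_zero_iff.mp (by rw [e7, hR₁]; rfl)
      have hss₂ : ss₂ = [] := List.length_eq_zero_iff.mp (by rw [f7, hR₂]; rfl)
      have hp : t₁.1 = t₂.1 := ext' (by rw [e1, f1, hR₁, hR₂])
      have hq : t₁.2 = t₂.2 := by rw [e2, f2, hs, hss₁, hss₂]
      exact Prod.ext_iff.mpr ⟨hp, hq⟩
    · have hR₁ : R₁ ≠ [] := fun hh => hY0 (e6.mp hh)
      have hR₂ : R₂ ≠ [] := fun hh => hY0 (f6.mp hh)
      obtain ⟨π₁', u₁', g1, g2, g3⟩ := e8 hR₁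
      obtain ⟨π₂', u₂', k1, k2, k3⟩ := f8 hR₂
      have huu : u₂' = u₁' := ext' (k2.trans g2.symm)
      rw [huu] at k3
      have hlenY : u₁'.verts.length ≤ n := by
        have hww := hw
        rw [e4] at hww
        rw [g2]
        simp at hww
        omega
      have heq := ih u₁' hlenY (π₁', ss₁) (π₂', ss₂) g3 k3
      have hπ' : π₁' = π₂' := congrArg Prod.fst heq
      have hss' : ss₁ = ss₂ := congrArg Prod.snd heq
      have hp : t₁.1 = t₂.1 := ext' (by rw [e1, f1, ← g1, ← k1, hπ'])
      have hq : t₁.2 = t₂.2 := by rw [e2, f2, hs, hss']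
      exact Prod.ext_iff.mpr ⟨hp, hq⟩

end QWalk

/-- Every walk `w` from `α` to `ω` on a finite quiver factorizes as
`w = (((π ⊙ s_p) ⊙ s_{p-1}) ⊙ ⋯) ⊙ s_0` for a *unique* simple path
`π = (ν₀ ν₁ ⋯ ν_p)` from `α` to `ω` and *unique* (possibly trivial) cycles
`s_j` off `ν_j` lying entirely in the deleted subquiver `G ∖ {ν₀, …, ν_{j-1}}`. -/
theorem stmt8 {V : Type} [Fintype V] (E : V → V → Prop) (α ω : V)
    (w : QWalk V E) (hα : w.first = α) (hω : w.last = ω) :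
    ∃! pss : QWalk V E × List (QWalk V E),
      pss.1.IsSimplePath ∧ pss.1.first = α ∧ pss.1.last = ω ∧
      pss.2.length = pss.1.verts.length ∧
      (∀ (j : ℕ) (s : QWalk V E) (ν : V),
        pss.2[j]? = some s → pss.1.verts[j]? = some ν →
          s.IsCycleOff ν ∧ ∀ v ∈ s.verts, v ∉ pss.1.verts.take j) ∧
      QWalk.LNestE pss.1 pss.2.reverse w := by
  subst hα
  subst hω
  obtain ⟨π, ss, h1, h2, h3, h4, h5, h6, _, _⟩ :=
    QWalk.exists_decomp w.verts.length w le_rfl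
  refine ⟨(π, ss), ⟨h1, h2, h3, h4, h5, h6.toLNestE⟩, ?_⟩
  intro t ht
  exact QWalk.uniq_decomp w.verts.length w le_rfl t (π, ss) ht
    ⟨h1, h2, h3, h4, h5, h6.toLNestE⟩
end

section
/- Let G be a finite quiver and let c be a nontrivial cycle off a vertex μ that does not have μ as an internal vertex. Then there exist a unique nontrivial simple cycle γ = (μ μ1 ⋯ μ(m−1) μ) off μ on G and unique cycles s1, …, s(m−1), where si is a possibly trivial cycle off μi lying entirely in the deleted subquiver G ∖ {μ, μ1, …, μ(i−1)}, such that c = ((γ ⊙ s(m−1)) ⊙ ⋯ ) ⊙ s1, where every nesting by a nontrivial si is a defined (canonical) nesting product and nesting by a trivial si acts as the identity. -/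
section Stmt9Aux

open List

variable {V : Type} [Inhabited V] {E : V → V → Prop}

namespace Stmt9Aux

theorem qwalk_ext {a b : QWalk V E} (h : a.verts = b.verts) : a = b := by
  cases a; cases b; cases h; rfl

theorem first_mem (a : QWalk V E) : a.first ∈ a.verts := List.head_mem _

theorem first_eq_headI (s : QWalk V E) : s.first = s.verts.headI := by
  obtain ⟨x, l, h⟩ := List.exists_cons_of_ne_nil s.ne
  simp [QWalk.first, h]

theorem split_first {α : Type*} {h : α} (X : List α) : ∀ {X' Y Y' : List α},
    X ++ h :: Y = X' ++ h :: Y' → h ∉ X → h ∉ X' → X = X' ∧ Y = Y' := by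
  induction X with
  | nil =>
    intro X' Y Y' e hX hX'
    cases X' with
    | nil => simpa using e
    | cons x X' =>
      simp only [nil_append, cons_append, cons.injEq] at e
      exact absurd (by simp [e.1]) hX'
  | cons x X ih =>
    intro X' Y Y' e hX hX'
    cases X' with
    | nil =>
      simp only [nil_append, cons_append, cons.injEq] at e
      exact absurd (by simp [e.1]) hX
    | cons y X' =>
      simp only [cons_append, cons.injEq] at e
      obtain ⟨rfl, e2⟩ := e
      obtain ⟨h1, h2⟩ := ih e2 (fun hm => hX (mem_cons_of_mem _ hm))
        (fun hm => hX' (mem_cons_of_mem _ hm))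
      exact ⟨by rw [h1], h2⟩

theorem split_last {α : Type*} {h : α} {X X' Y Y' : List α}
    (e : X ++ h :: Y = X' ++ h :: Y') (hY : h ∉ Y) (hY' : h ∉ Y') : X = X' ∧ Y = Y' := by
  have e' : Y.reverse ++ h :: X.reverse = Y'.reverse ++ h :: X'.reverse := by
    have := congrArg List.reverse e
    simpa [List.reverse_append, List.append_assoc] using this
  obtain ⟨h1, h2⟩ := split_first _ e' (by simpa using hY) (by simpa using hY')
  constructor
  · rw [← List.reverse_reverse X, h2, List.reverse_reverse]
  · rw [← List.reverse_reverse Y, h1, List.reverse_reverse]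

theorem chain_splice {X Y B : List V} {h : V}
    (hc : List.Chain' E (X ++ h :: Y)) (hB : List.Chain' E B)
    (h1 : B.head? = some h) (h2 : B.getLast? = some h) :
    List.Chain' E (X ++ B ++ Y) := by
  unfold List.Chain' at hc hB ⊢
  rw [List.append_assoc, List.isChain_append]
  rw [List.isChain_append] at hc
  obtain ⟨hcX, hcY, hlink⟩ := hc
  refine ⟨hcX, ?_, ?_⟩
  · rw [List.isChain_append]
    refine ⟨hB, (List.isChain_cons.mp hcY).2, ?_⟩
    intro x hx y hy
    rw [h2] at hx
    simp only [Option.mem_def, Option.some.injEq] at hx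
    subst hx
    exact (List.isChain_cons.mp hcY).1 y hy
  · intro x hx y hy
    have hBY : (B ++ Y).head? = some h := by
      cases B with
      | nil => simp at h1
      | cons b B' =>
        simp only [List.head?_cons, Option.some.injEq] at h1
        simp [h1]
    rw [hBY] at hy
    simp only [Option.mem_def, Option.some.injEq] at hy
    subst hy
    exact hlink x hx h (by simp)

/-- Decomposition of `L` into blocks, each starting and ending at its head,
avoiding `F` and the heads of all earlier blocks. -/
inductive Dec : List V → List V → List (List V) → Prop
  | nil (F : List V) : Dec [] F []
  | cons {B L F : List V} {bs : List (List V)} (hne : B ≠ [])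
      (hlast : B.getLast? = some B.headI)
      (hdisj : ∀ v ∈ B, v ∉ F)
      (htail : Dec L (B.headI :: F) bs) :
      Dec (B ++ L) F (B :: bs)

theorem dec_flatten {L F : List V} {bs : List (List V)} (h : Dec L F bs) :
    bs.flatten = L := by
  induction h with
  | nil => rfl
  | cons hne hlast hdisj htail ih => simp [ih]

theorem dec_avoid {L F : List V} {bs : List (List V)} (h : Dec L F bs) :
    ∀ v ∈ L, v ∉ F := by
  induction h with
  | nil => simp
  | cons hne hlast hdisj htail ih =>
    intro v hv
    rcases List.mem_append.mp hv with hv | hv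
    · exact hdisj v hv
    · exact fun hF => ih v hv (mem_cons_of_mem _ hF)

theorem dec_blocks {L F : List V} {bs : List (List V)} (h : Dec L F bs) :
    ∀ B ∈ bs, B ≠ [] ∧ B.getLast? = some B.headI ∧ ∀ v ∈ B, v ∉ F := by
  induction h with
  | nil => simp
  | cons hne hlast hdisj htail ih =>
    intro B hB
    rcases List.mem_cons.mp hB with rfl | hB
    · exact ⟨hne, hlast, hdisj⟩
    · obtain ⟨h1, h2, h3⟩ := ih B hB
      exact ⟨h1, h2, fun v hv hF => h3 v hv (mem_cons_of_mem _ hF)⟩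

theorem dec_pairwise {L F : List V} {bs : List (List V)} (h : Dec L F bs) :
    List.Pairwise (fun A B : List V => A.headI ∉ B) bs := by
  induction h with
  | nil => simp
  | cons hne hlast hdisj htail ih =>
    refine List.Pairwise.cons ?_ ih
    intro B' hB' hmem
    have : _ ∈ _ := List.mem_flatten.mpr ⟨B', hB', hmem⟩
    rw [dec_flatten htail] at this
    exact dec_avoid htail _ this (by simp)

theorem headI_append {B L : List V} (h : B ≠ []) : (B ++ L).headI = B.headI := by
  obtain ⟨x, l, rfl⟩ := List.exists_cons_of_ne_nil h
  rfl


theorem dec_intro : ∀ (bs : List (List V)) (F : List V),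
    (∀ B ∈ bs, B ≠ []) → (∀ B ∈ bs, B.getLast? = some B.headI) →
    List.Pairwise (fun A B : List V => A.headI ∉ B) bs →
    (∀ B ∈ bs, ∀ v ∈ B, v ∉ F) → Dec bs.flatten F bs := by
  intro bs
  induction bs with
  | nil => intro F _ _ _ _; exact Dec.nil F
  | cons B bs ih =>
    intro F hne hhl hpw hav
    have hpw' := List.pairwise_cons.mp hpw
    have : Dec (B ++ bs.flatten) F (B :: bs) := by
      refine Dec.cons (hne B (by simp)) (hhl B (by simp)) (hav B (by simp)) ?_
      apply ih _ (fun B' h => hne B' (by simp [h])) (fun B' h => hhl B' (by simp [h])) hpw'.2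
      intro B' hB' v hv hm
      rcases List.mem_cons.mp hm with rfl | hm
      · exact hpw'.1 B' hB' hv
      · exact hav B' (by simp [hB']) v hv hm
    simpa using this

theorem dec_nil_inv {L F : List V} (h : Dec L F []) : L = [] := by
  cases h; rfl

theorem dec_cons_inv {L F B : List V} {bs : List (List V)} (h : Dec L F (B :: bs)) :
    B ≠ [] ∧ B.getLast? = some B.headI ∧ (∀ v ∈ B, v ∉ F) ∧
      ∃ L', L = B ++ L' ∧ Dec L' (B.headI :: F) bs := by
  cases h with
  | cons hne hlast hdisj htail => exact ⟨hne, hlast, hdisj, _, rfl, htail⟩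

theorem dec_unique : ∀ {bs bs' : List (List V)} {L F : List V},
    Dec L F bs → Dec L F bs' → bs = bs' := by
  intro bs
  induction bs with
  | nil =>
    intro bs' L F h1 h2
    cases bs' with
    | nil => rfl
    | cons B' bs₂ =>
      obtain ⟨hne', _, _, L', hL', _⟩ := dec_cons_inv h2
      rw [dec_nil_inv h1] at hL'
      exact absurd (List.append_eq_nil_iff.mp hL'.symm).1 hne'
  | cons B bs ih =>
    intro bs' L F h1 h2
    obtain ⟨hne, hlast, hdisj, L₁, rfl, htail⟩ := dec_cons_inv h1
    cases bs' with
    | nil => exact absurd (List.append_eq_nil_iff.mp (dec_nil_inv h2)).1 hne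
    | cons B' bs₂ =>
      obtain ⟨hne', hlast', hdisj', L₂, hL₂, htail'⟩ := dec_cons_inv h2
      -- common head
      have hhead : B.headI = B'.headI := by
        rw [← headI_append (L := L₁) hne, hL₂, headI_append hne']
      set h := B.headI with hh
      -- write B and B' with explicit last element
      have hBlast : B.getLast hne = h := by
        have := List.getLast?_eq_getLast hne
        rw [hlast] at this; exact (Option.some.injEq _ _ ▸ this.symm)
      have hB'last : B'.getLast hne' = h := by
        have := List.getLast?_eq_getLast hne'
        rw [hlast'] at this
        have := (Option.some.injEq _ _ ▸ this.symm)
        rw [this, hhead]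
      have hB : B.dropLast ++ [h] = B := by
        rw [← hBlast]; exact List.dropLast_append_getLast hne
      have hB' : B'.dropLast ++ [h] = B' := by
        rw [← hB'last]; exact List.dropLast_append_getLast hne'
      have hhL₁ : h ∉ L₁ := fun hm => dec_avoid htail _ hm (by simp)
      have hhL₂ : h ∉ L₂ := by
        intro hm
        have := dec_avoid htail' _ hm
        rw [← hhead] at this
        exact this (by simp)
      have heq : B.dropLast ++ h :: L₁ = B'.dropLast ++ h :: L₂ := by
        have : B ++ L₁ = B' ++ L₂ := hL₂
        rw [← hB, ← hB'] at this
        simpa [List.append_assoc] using this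
      obtain ⟨hdl, hLL⟩ := split_last heq hhL₁ hhL₂
      have hBB : B = B' := by rw [← hB, ← hB', hdl]
      subst hLL
      have htail'' : Dec L₁ (h :: F) bs₂ := by rwa [← hhead] at htail'
      rw [hBB, ih htail htail'']

theorem mem_split_first {α : Type*} {h : α} {l : List α} (hm : h ∈ l) :
    ∃ s t, l = s ++ h :: t ∧ h ∉ s := by
  induction l with
  | nil => cases hm
  | cons x l ih =>
    by_cases hx : h = x
    · exact ⟨[], l, by simp [hx], by simp⟩
    · have hml : h ∈ l := by
        rcases List.mem_cons.mp hm with h1 | h1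
        · exact absurd h1 hx
        · exact h1
      obtain ⟨s, t, hst, hs⟩ := ih hml
      exact ⟨x :: s, t, by simp [hst], by simp [hs, hx]⟩

theorem dec_exists_aux : ∀ (n : ℕ) (L F : List V), L.length ≤ n →
    (∀ v ∈ L, v ∉ F) → ∃ bs, Dec L F bs := by
  intro n
  induction n with
  | zero =>
    intro L F hl _
    rw [List.eq_nil_of_length_eq_zero (Nat.le_zero.mp hl)]
    exact ⟨[], Dec.nil F⟩
  | succ n ih =>
    intro L F hl hLF
    cases L with
    | nil => exact ⟨[], Dec.nil F⟩
    | cons x L₀ =>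
      have hx : x ∈ (x :: L₀).reverse := by simp
      obtain ⟨C, D, hrev, hC⟩ := mem_split_first hx
      have hL : x :: L₀ = D.reverse ++ x :: C.reverse := by
        have := congrArg List.reverse hrev
        simpa [List.reverse_append, List.append_assoc] using this
      have hBh : (D.reverse ++ [x]).headI = x := by
        cases hD : D.reverse with
        | nil => simp
        | cons d ds =>
          rw [hD] at hL
          simp only [List.cons_append, List.cons.injEq] at hL
          simp [hL.1]
      have hlen : C.reverse.length ≤ n := by
        have h1 := congrArg List.length hL
        have h2 := hl
        simp only [List.length_cons, List.length_append, List.length_reverse] at h1 h2 ⊢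
        omega
      have hsubL : ∀ v ∈ C.reverse, v ∈ x :: L₀ := by
        intro v hv; rw [hL]; exact List.mem_append.mpr (Or.inr (List.mem_cons_of_mem _ hv))
      have hsub : ∀ v ∈ C.reverse, v ∉ x :: F := by
        intro v hv hmem
        rcases List.mem_cons.mp hmem with rfl | hmem
        · exact hC (by simpa using hv)
        · exact hLF v (hsubL v hv) hmem
      obtain ⟨bs, hbs⟩ := ih C.reverse (x :: F) hlen hsub
      refine ⟨(D.reverse ++ [x]) :: bs, ?_⟩
      have : Dec ((D.reverse ++ [x]) ++ C.reverse) F ((D.reverse ++ [x]) :: bs) := by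
        refine Dec.cons (by simp) (by simp [hBh]) ?_ ?_
        · intro v hv
          apply hLF v
          rw [hL]
          rcases List.mem_append.mp hv with h1 | h1
          · exact List.mem_append.mpr (Or.inl h1)
          · simp only [List.mem_singleton] at h1; simp [h1]
        · rw [hBh]; exact hbs
      rw [hL]; simpa [List.append_assoc] using this

theorem dec_exists (L F : List V) (hLF : ∀ v ∈ L, v ∉ F) : ∃ bs, Dec L F bs :=
  dec_exists_aux L.length L F le_rfl hLF

theorem chain_heads : ∀ (bs : List (List V)) (x : V) (T : List V),
    List.Chain' E (x :: bs.flatten ++ T) →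
    (∀ B ∈ bs, B ≠ []) → (∀ B ∈ bs, B.getLast? = some B.headI) →
    List.Chain' E (x :: bs.map List.headI ++ T) := by
  intro bs
  induction bs with
  | nil => intro x T hc _ _; simpa using hc
  | cons B bs ih =>
    intro x T hc hne hhl
    have hBne : B ≠ [] := hne B (by simp)
    obtain ⟨b, B', rfl⟩ := List.exists_cons_of_ne_nil hBne
    have hBl : (b :: B').getLast? = some b := by exact hhl _ (by simp)
    have hBlast : (b :: B').getLast (by simp) = b := by
      have := List.getLast?_eq_getLast (l := b :: B') (by simp)
      rw [hBl] at this
      exact (Option.some.injEq _ _ ▸ this.symm)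
    have hBdrop : (b :: B').dropLast ++ [b] = b :: B' := by
      have h := List.dropLast_append_getLast (l := b :: B') (by simp)
      rwa [hBlast] at h
    have hsuf : List.Chain' E (b :: bs.flatten ++ T) := by
      apply hc.suffix
      refine ⟨x :: (b :: B').dropLast, ?_⟩
      calc (x :: (b :: B').dropLast) ++ (b :: bs.flatten ++ T)
          = x :: (((b :: B').dropLast ++ [b]) ++ bs.flatten ++ T) := by
            simp [List.append_assoc]
        _ = x :: ((b :: B') ++ bs.flatten ++ T) := by rw [hBdrop]
        _ = x :: ((b :: B') :: bs).flatten ++ T := by simp [List.append_assoc]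
    have ih' := ih b T hsuf (fun B hB => hne B (by simp [hB])) (fun B hB => hhl B (by simp [hB]))
    have hedge : E x b := by
      have h2 : E x b ∧ List.Chain' E (b :: (B' ++ (bs.flatten ++ T))) := by
        simpa [List.Chain', List.isChain_cons_cons] using hc
      exact h2.1
    have goal' : List.Chain' E (x :: (b :: (bs.map List.headI ++ T))) := by
      refine List.isChain_cons_cons.mpr ⟨hedge, ?_⟩
      simpa [List.cons_append, List.Chain'] using ih'
    simpa [List.cons_append] using goal'

theorem exists_walks : ∀ (bs : List (List V)), (∀ B ∈ bs, B ≠ []) →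
    (∀ B ∈ bs, List.Chain' E B) →
    ∃ ss : List (QWalk V E), ss.map QWalk.verts = bs := by
  intro bs
  induction bs with
  | nil => exact fun _ _ => ⟨[], rfl⟩
  | cons B bs ih =>
    intro hne hch
    obtain ⟨ss, hss⟩ := ih (fun B hB => hne B (by simp [hB])) (fun B hB => hch B (by simp [hB]))
    exact ⟨⟨B, hne B (by simp), hch B (by simp)⟩ :: ss, by simp [hss]⟩

theorem nest_iff : ∀ (ss : List (QWalk V E)) (T : List V) (u : QWalk V E)
    (P : List V) (w : QWalk V E),
    P ≠ [] → T ≠ [] →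
    (∀ s ∈ ss, s.first = s.last) →
    List.Pairwise (fun a b : QWalk V E => a.first ∉ b.verts) ss →
    (∀ s ∈ ss, ∀ v ∈ P, v ∉ s.verts) →
    (∀ s ∈ ss, s.first ∉ T) →
    u.verts = P ++ ss.map QWalk.first ++ T →
    (QWalk.LNestE u ss.reverse w ↔ w.verts = P ++ (ss.map QWalk.verts).flatten ++ T) := by
  intro ss
  induction ss using List.reverseRecOn with
  | nil =>
    intro T u P w hP hT _ _ _ _ hu
    simp only [List.reverse_nil, List.map_nil, List.flatten_nil, List.append_nil] at hu ⊢
    constructor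
    · intro hln
      cases hln
      simpa using hu
    · intro hw
      have : w = u := qwalk_ext (by rw [hw, hu])
      rw [this]
      exact QWalk.LNestE.nil u
  | append_singleton ss s ih =>
    intro T u P w hP hT h1 h2 h3 h4 hu
    have hsmem : s ∈ ss ++ [s] := by simp
    have hsfirstB : s.first ∈ s.verts := first_mem s
    have hpair : ∀ a ∈ ss, a.first ∉ s.verts := by
      intro a ha
      exact (List.pairwise_append.mp h2).2.2 a ha s (by simp)
    have hpss : List.Pairwise (fun a b : QWalk V E => a.first ∉ b.verts) ss :=
      (List.pairwise_append.mp h2).1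
    have hnotP : s.first ∉ P := fun hm => h3 s hsmem s.first hm hsfirstB
    have hnotHs : s.first ∉ ss.map QWalk.first := by
      intro hm
      obtain ⟨a, ha, hfa⟩ := List.mem_map.mp hm
      exact hpair a ha (hfa ▸ hsfirstB)
    have hnotT : s.first ∉ T := h4 s hsmem
    have hu' : u.verts = (P ++ ss.map QWalk.first) ++ s.first :: T := by
      rw [hu]; simp [List.append_assoc]
    have hT' : s.verts ++ T ≠ [] := fun hnil => hT (List.append_eq_nil_iff.mp hnil).2
    have hflat : ((ss ++ [s]).map QWalk.verts).flatten = (ss.map QWalk.verts).flatten ++ s.verts := by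
      simp
    have hrev : (ss ++ [s]).reverse = s :: ss.reverse := by simp
    -- conditions for ih
    have ih1 : ∀ a ∈ ss, a.first = a.last := fun a ha => h1 a (by simp [ha])
    have ih3 : ∀ a ∈ ss, ∀ v ∈ P, v ∉ a.verts := fun a ha => h3 a (by simp [ha])
    have ih4 : ∀ a ∈ ss, a.first ∉ s.verts ++ T := by
      intro a ha hm
      rcases List.mem_append.mp hm with hm | hm
      · exact hpair a ha hm
      · exact h4 a (by simp [ha]) hm
    rw [hrev]
    constructor
    · intro hln
      cases hln with
      | @cons _ _ u₁ _ _ hne hrest =>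
        cases hne with
        | inr htriv =>
          exfalso
          have hlenu : u.verts.length = P.length + ss.length + 1 + T.length := by
            rw [hu']; simp; omega
          have hPpos : 0 < P.length := List.length_pos_iff.mpr hP
          have : u.len = u.verts.length - 1 := rfl
          have h0 := htriv.1
          unfold QWalk.Trivial QWalk.len at h0
          omega
        | inl hnest =>
          obtain ⟨β, A₁, A₂, hb1, hb2, hsplit, hβA₂, _, hwv⟩ := hnest
          rw [← hb1] at hsplit hβA₂
          have heq : (P ++ ss.map QWalk.first) ++ s.first :: T = A₁ ++ s.first :: A₂ := by
            rw [← hu', hsplit]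
          obtain ⟨hA₁, hA₂⟩ := split_last heq hnotT hβA₂
          have hu₁ : u₁.verts = P ++ ss.map QWalk.first ++ (s.verts ++ T) := by
            rw [hwv, ← hA₁, ← hA₂]; simp [List.append_assoc]
          have := (ih (s.verts ++ T) u₁ P w hP hT' ih1 hpss ih3 ih4 hu₁).mp hrest
          rw [this, hflat]
          simp [List.append_assoc]
    · intro hw
      have hhead? : s.verts.head? = some s.first := List.head?_eq_head s.ne
      have hlast? : s.verts.getLast? = some s.first := by
        rw [h1 s hsmem]; exact List.getLast?_eq_getLast s.ne
      have hchain : List.Chain' E ((P ++ ss.map QWalk.first) ++ s.verts ++ T) := by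
        refine chain_splice ?_ s.chain hhead? hlast?
        rw [← hu']; exact u.chain
      have hune : (P ++ ss.map QWalk.first) ++ s.verts ++ T ≠ [] := by
        intro hnil
        exact hT (List.append_eq_nil_iff.mp hnil).2
      set u₁ : QWalk V E := ⟨(P ++ ss.map QWalk.first) ++ s.verts ++ T, hune, hchain⟩ with hu₁def
      refine QWalk.LNestE.cons (u := u₁) ?_ ?_
      · left
        refine ⟨s.first, P ++ ss.map QWalk.first, T, rfl, (h1 s hsmem).symm, hu', hnotT,
          Or.inr ?_, rfl⟩
        intro v hv hvne
        rcases List.mem_append.mp hv with hv | hv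
        · exact fun hm => h3 s hsmem v hv hm
        · obtain ⟨a, ha, hfa⟩ := List.mem_map.mp hv
          exact fun hm => hpair a ha (hfa ▸ hm)
      · apply (ih (s.verts ++ T) u₁ P w hP hT' ih1 hpss ih3 ih4 (by
          rw [hu₁def]; simp [List.append_assoc])).mpr
        rw [hw, hflat]
        simp [List.append_assoc]

end Stmt9Aux
end Stmt9Aux

/-- Every nontrivial cycle `c` off `μ` without `μ` as internal vertex
factorizes as `c = ((γ ⊙ s_{m-1}) ⊙ ⋯) ⊙ s_1` for a *unique* nontrivial simple cycle
`γ = (μ μ₁ ⋯ μ_{m-1} μ)` off `μ` and *unique* (possibly trivial) cycles `s_i` off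
`μ_i` lying entirely in the deleted subquiver `G ∖ {μ, μ₁, …, μ_{i-1}}`. -/
theorem stmt9 {V : Type} [Fintype V] (E : V → V → Prop) (μ : V)
    (c : QWalk V E) (hc : c.IsCycleOff μ) (hnt : ¬ c.Trivial)
    (hint : μ ∉ c.verts.tail.dropLast) :
    ∃! gss : QWalk V E × List (QWalk V E),
      gss.1.IsSimpleCycle ∧ gss.1.first = μ ∧ ¬ gss.1.Trivial ∧
      gss.2.length = gss.1.verts.length - 2 ∧
      (∀ (j : ℕ) (s : QWalk V E) (ν : V),
        gss.2[j]? = some s → gss.1.verts[j + 1]? = some ν →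
          s.IsCycleOff ν ∧ ∀ v ∈ s.verts, v ∉ gss.1.verts.take (j + 1)) ∧
      QWalk.LNestE gss.1 gss.2.reverse c := by
  classical
  haveI : Inhabited V := ⟨μ⟩
  obtain ⟨hcyc, hfirst⟩ := hc
  have hlen2 : 2 ≤ c.verts.length := by
    have h3 := hnt
    unfold QWalk.Trivial QWalk.len at h3
    have := List.length_pos_iff.mpr c.ne
    omega
  obtain ⟨x, rest, hxr⟩ := List.exists_cons_of_ne_nil c.ne
  have hx : x = μ := by
    have h := hfirst
    unfold QWalk.first at h
    rw [← h]
    simp [hxr]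
  subst hx
  have hrestne : rest ≠ [] := by
    intro h
    rw [h] at hxr
    rw [hxr] at hlen2
    simp at hlen2
  have hlast? : c.verts.getLast? = some x := by
    rw [List.getLast?_eq_getLast c.ne]
    have h1 : c.last = x := by rw [← hcyc]; exact hfirst
    exact congrArg some h1
  have hrestlast : rest.getLast hrestne = x := by
    rw [hxr] at hlast?
    obtain ⟨r, rest', hre⟩ := List.exists_cons_of_ne_nil hrestne
    subst hre
    rw [List.getLast?_cons_cons, List.getLast?_eq_getLast (by simp)] at hlast?
    exact Option.some.inj hlast?
  set L := rest.dropLast with hLdef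
  have hrest : rest = L ++ [x] := by
    rw [hLdef, ← hrestlast]
    exact (List.dropLast_append_getLast hrestne).symm
  have hcv : c.verts = x :: (L ++ [x]) := by rw [hxr, hrest]
  have hmuL : x ∉ L := by
    have h := hint
    rw [hxr] at h
    simpa [hLdef] using h
  -- decomposition of L
  obtain ⟨bs, hdec⟩ := Stmt9Aux.dec_exists L [x] (by
    intro v hv hm
    simp only [List.mem_singleton] at hm
    subst hm
    exact hmuL hv)
  have hjoin : bs.flatten = L := Stmt9Aux.dec_flatten hdec
  have hblocks := Stmt9Aux.dec_blocks hdec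
  have hbpair := Stmt9Aux.dec_pairwise hdec
  have hLinfix : L <:+: c.verts := by
    rw [hcv]
    exact ⟨[x], [x], by simp⟩
  have hchains : ∀ B ∈ bs, List.Chain' E B := by
    intro B hB
    exact c.chain.infix ((List.infix_of_mem_flatten hB).trans (hjoin.symm ▸ hLinfix))
  obtain ⟨ss, hss⟩ := Stmt9Aux.exists_walks bs (fun B hB => (hblocks B hB).1) hchains
  set hs : List V := bs.map List.headI with hhs
  have hsslen : ss.length = bs.length := by rw [← hss]; simp
  have hhslen : hs.length = bs.length := by simp [hhs]
  have hmapfirst : ss.map QWalk.first = hs := by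
    rw [hhs, ← hss, List.map_map]
    apply List.map_congr_left
    intro s _
    simp only [Function.comp_apply]
    exact Stmt9Aux.first_eq_headI s
  have hmemver : ∀ s ∈ ss, s.verts ∈ bs := by
    intro s hsm
    rw [← hss]
    exact List.mem_map_of_mem hsm
  have hsfl : ∀ s ∈ ss, s.first = s.last := by
    intro s hsm
    have h2 := (hblocks _ (hmemver s hsm)).2.1
    have h3 := List.getLast?_eq_getLast s.ne
    have h4 : s.verts.getLast s.ne = s.verts.headI := Option.some.inj (h3.symm.trans h2)
    rw [Stmt9Aux.first_eq_headI]
    exact h4.symm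
  have hmunotB : ∀ s ∈ ss, x ∉ s.verts := by
    intro s hsm hm
    exact (hblocks _ (hmemver s hsm)).2.2 x hm (by simp)
  have hsspair : List.Pairwise (fun a b : QWalk V E => a.first ∉ b.verts) ss := by
    have h := hbpair
    rw [← hss, List.pairwise_map] at h
    exact h.imp (fun {a b} hab => by rwa [Stmt9Aux.first_eq_headI])
  have h3cond : ∀ s ∈ ss, ∀ v ∈ ([x] : List V), v ∉ s.verts := by
    intro s hsm v hv
    simp only [List.mem_singleton] at hv
    subst hv
    exact hmunotB s hsm
  have h4cond : ∀ s ∈ ss, s.first ∉ ([x] : List V) := by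
    intro s hsm hm
    simp only [List.mem_singleton] at hm
    exact hmunotB s hsm (hm ▸ Stmt9Aux.first_mem s)
  have hheadImem : ∀ B ∈ bs, B.headI ∈ B := by
    intro B hB
    obtain ⟨b, B', rfl⟩ := List.exists_cons_of_ne_nil ((hblocks B hB).1)
    simp
  -- build gamma
  have hgne : (x :: (hs ++ [x]) : List V) ≠ [] := by simp
  have hgchain : List.Chain' E (x :: (hs ++ [x])) := by
    have h0 : List.Chain' E (x :: (bs.flatten ++ [x])) := by
      rw [hjoin, ← hcv]
      exact c.chain
    have := Stmt9Aux.chain_heads bs x [x] (by simpa using h0)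
      (fun B hB => (hblocks B hB).1) (fun B hB => (hblocks B hB).2.1)
    simpa [hhs] using this
  set g : QWalk V E := ⟨x :: (hs ++ [x]), hgne, hgchain⟩ with hgdef
  have hglast : g.verts.getLast g.ne = x := by
    have h := List.getLast?_eq_getLast g.ne
    have h2 : g.verts.getLast? = some x := by
      show (x :: (hs ++ [x])).getLast? = some x
      rw [show x :: (hs ++ [x]) = (x :: hs) ++ [x] from by simp]
      exact List.getLast?_concat
    exact Option.some.inj (h.symm.trans h2)
  have hgfirst : g.first = x := rfl
  have hhsnodup : hs.Nodup := by
    rw [hhs, List.Nodup]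
    rw [List.pairwise_map]
    exact hbpair.imp_of_mem (fun {a b} ha hb hab => fun he => hab (he ▸ hheadImem b hb))
  have hmunoths : x ∉ hs := by
    intro hm
    rw [hhs] at hm
    obtain ⟨B, hB, hBe⟩ := List.mem_map.mp hm
    exact (hblocks B hB).2.2 x (hBe ▸ hheadImem B hB) (by simp)
  have hgverts : g.verts = [x] ++ ss.map QWalk.first ++ [x] := by
    show x :: (hs ++ [x]) = [x] ++ ss.map QWalk.first ++ [x]
    rw [hmapfirst]
    simp
  have hLNest : QWalk.LNestE g ss.reverse c := by
    apply (Stmt9Aux.nest_iff ss [x] g [x] c (by simp) (by simp) hsfl hsspair h3cond h4cond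
      hgverts).mpr
    rw [hss, hjoin, hcv]
    simp
  refine ⟨⟨g, ss⟩, ⟨⟨?_, ?_⟩, hgfirst, ?_, ?_, ?_, hLNest⟩, ?_⟩
  · -- IsCycle
    show g.first = g.last
    rw [hgfirst]
    exact hglast.symm
  · -- tail nodup
    show (x :: (hs ++ [x])).tail.Nodup
    simp only [List.tail_cons]
    rw [List.nodup_append]
    refine ⟨hhsnodup, by simp, ?_⟩
    intro a ha b hax hab
    simp only [List.mem_singleton] at hax
    exact hmunoths (hax ▸ hab ▸ ha)
  · -- nontrivial
    show ¬ ((x :: (hs ++ [x])).length - 1 = 0)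
    simp
  · -- length
    show ss.length = (x :: (hs ++ [x])).length - 2
    simp [hsslen, hhslen]
  · -- index condition
    intro j s nu hjs hnu
    dsimp only at hjs hnu ⊢
    have hj : j < ss.length := by
      by_contra h
      push_neg at h
      rw [List.getElem?_eq_none h] at hjs
      cases hjs
    have hjh : j < hs.length := by omega
    have hseq : s = ss[j] := by
      rw [List.getElem?_eq_getElem hj] at hjs
      exact (Option.some.inj hjs).symm
    have hsv : s.verts = bs[j]'(by omega) := by
      calc s.verts = ss[j].verts := by rw [hseq]
        _ = (List.map QWalk.verts ss)[j]'(by simpa using hj) := (List.getElem_map _).symm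
        _ = bs[j]'(by omega) := List.getElem_of_eq hss _
    have hnu' : nu = hs[j] := by
      have h : g.verts[j+1]? = some (hs[j]'hjh) := by
        show (x :: (hs ++ [x]))[j+1]? = _
        rw [List.getElem?_cons_succ]
        rw [List.getElem?_append_left hjh]
        exact List.getElem?_eq_getElem hjh
      rw [h] at hnu
      exact (Option.some.inj hnu).symm
    have hsfirst : s.first = nu := by
      rw [hnu', Stmt9Aux.first_eq_headI, hsv]
      simp [hhs]
    constructor
    · exact ⟨hsfl s (hseq ▸ List.getElem_mem hj), hsfirst⟩
    · intro v hv hm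
      have htake : g.verts.take (j+1) = x :: hs.take j := by
        show (x :: (hs ++ [x])).take (j+1) = _
        rw [List.take_succ_cons, List.take_append_of_le_length (by omega)]
      rw [htake] at hm
      rcases List.mem_cons.mp hm with rfl | hm
      · exact hmunotB s (hseq ▸ List.getElem_mem hj) hv
      · obtain ⟨i, hi, hie⟩ := List.mem_iff_getElem.mp hm
        have hilt : i < j := by
          have := hi
          simp at this
          omega
        have hie2 : hs[i]'(by omega) = v := by
          rw [← hie]
          exact List.getElem_take.symm
        have hpij : (bs[i]'(by omega)).headI ∉ (bs[j]'(by omega)) := by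
          have := List.pairwise_iff_getElem.mp hbpair i j (by omega) (by omega) hilt
          exact this
        apply hpij
        have : (bs[i]'(by omega)).headI = v := by
          rw [← hie2]
          exact (List.getElem_map _).symm
        rw [this, ← hsv]
        exact hv
  · -- uniqueness
    rintro ⟨g', ss'⟩ ⟨⟨hcyc', hnodup'⟩, hfirst', hnt', hlen', hcond', hln'⟩
    replace hcyc' : g'.IsCycle := hcyc'
    replace hnodup' : g'.verts.tail.Nodup := hnodup'
    replace hfirst' : g'.first = x := hfirst'
    replace hnt' : ¬ g'.Trivial := hnt'
    replace hlen' : ss'.length = g'.verts.length - 2 := hlen'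
    replace hcond' : ∀ (j : ℕ) (s : QWalk V E) (ν : V),
        ss'[j]? = some s → g'.verts[j + 1]? = some ν →
          s.IsCycleOff ν ∧ ∀ v ∈ s.verts, v ∉ g'.verts.take (j + 1) := hcond'
    replace hln' : QWalk.LNestE g' ss'.reverse c := hln'
    have hg'lenge : 2 ≤ g'.verts.length := by
      have h := hnt'
      unfold QWalk.Trivial QWalk.len at h
      have := List.length_pos_iff.mpr g'.ne
      omega
    have hg'len : g'.verts.length = ss'.length + 2 := by
        omega
    have hkey : ∀ j (hj : j < ss'.length),
        (ss'[j]).IsCycleOff (g'.verts[j+1]'(by omega)) ∧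
          ∀ v ∈ (ss'[j]).verts, v ∉ g'.verts.take (j+1) := by
      intro j hj
      exact hcond' j (ss'[j]) _ (List.getElem?_eq_getElem hj) (List.getElem?_eq_getElem (by omega))
    have hg'first : ∀ j (hj : j < ss'.length), (ss'[j]).first = g'.verts[j+1]'(by omega) :=
      fun j hj => (hkey j hj).1.2
    have htakeC : ∀ j (hj : j < ss'.length), ∀ v ∈ (ss'[j]).verts, v ∉ g'.verts.take (j+1) :=
      fun j hj => (hkey j hj).2
    have hg'0 : g'.verts[0]'(by omega) = x := by
      rw [List.getElem_zero]
      exact hfirst'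
    have hmu' : ∀ j (hj : j < ss'.length), x ∉ (ss'[j]).verts := by
      intro j hj hm
      apply htakeC j hj x hm
      rw [← hg'0]
      have h0 : (g'.verts.take (j+1))[0]'(by simp; omega) = g'.verts[0]'(by omega) :=
        List.getElem_take
      rw [← h0]
      exact List.getElem_mem _
    have hpair' : List.Pairwise (fun a b : QWalk V E => a.first ∉ b.verts) ss' := by
      rw [List.pairwise_iff_getElem]
      intro i j hi hj hij hmem
      apply htakeC j hj _ hmem
      rw [hg'first i hi]
      have h1 : i + 1 < (g'.verts.take (j+1)).length := by simp; omega
      have h0 : (g'.verts.take (j+1))[i+1]'h1 = g'.verts[i+1]'(by omega) := List.getElem_take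
      rw [← h0]
      exact List.getElem_mem _
    have hsfl' : ∀ s ∈ ss', s.first = s.last := by
      intro s hsm
      obtain ⟨j, hj, rfl⟩ := List.mem_iff_getElem.mp hsm
      exact (hkey j hj).1.1
    have h3' : ∀ s ∈ ss', ∀ v ∈ ([x] : List V), v ∉ s.verts := by
      intro s hsm v hv
      simp only [List.mem_singleton] at hv
      subst hv
      obtain ⟨j, hj, rfl⟩ := List.mem_iff_getElem.mp hsm
      exact hmu' j hj
    have h4' : ∀ s ∈ ss', s.first ∉ ([x] : List V) := by
      intro s hsm hm
      simp only [List.mem_singleton] at hm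
      exact h3' s hsm x (by simp) (hm ▸ Stmt9Aux.first_mem s)
    have hg'v : g'.verts = x :: (ss'.map QWalk.first ++ [x]) := by
      apply List.ext_getElem
      · simp [hg'len]
      · intro i h1i h2i
        cases i with
        | zero =>
          simp only [List.getElem_cons_zero]
          exact hg'0
        | succ j =>
          by_cases hj : j < ss'.length
          · rw [← hg'first j hj]
            rw [List.getElem_cons_succ]
            rw [List.getElem_append_left (by simpa using hj)]
            simp
          · have hj' : j = ss'.length := by
              have := h1i
              rw [hg'len] at this
              omega
            subst hj'
            have hidx : ss'.length + 1 = g'.verts.length - 1 := by omega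
            have hL : g'.verts[ss'.length+1]'h1i = g'.verts.getLast g'.ne := by
              rw [List.getLast_eq_getElem]
              congr 1
            have hlast : g'.verts.getLast g'.ne = x := hcyc'.symm.trans hfirst'
            rw [hL, hlast, List.getElem_cons_succ,
              List.getElem_append_right (by simp)]
            simp
    have hg'v2 : g'.verts = [x] ++ ss'.map QWalk.first ++ [x] := by
      rw [hg'v]; simp
    have hforce := (Stmt9Aux.nest_iff ss' [x] g' [x] c (by simp) (by simp) hsfl' hpair' h3' h4'
      hg'v2).mp hln'
    have hLflat : (ss'.map QWalk.verts).flatten = L := by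
      have h1 : x :: ((ss'.map QWalk.verts).flatten ++ [x]) = x :: (L ++ [x]) := by
        rw [← hcv, hforce]
        simp
      have h2 := List.cons.inj h1
      exact (List.append_left_inj [x]).mp h2.2
    have hdec' : Stmt9Aux.Dec L [x] (ss'.map QWalk.verts) := by
      rw [← hLflat]
      apply Stmt9Aux.dec_intro
      · intro B hB
        obtain ⟨s, hsm, rfl⟩ := List.mem_map.mp hB
        exact s.ne
      · intro B hB
        obtain ⟨s, hsm, rfl⟩ := List.mem_map.mp hB
        rw [List.getLast?_eq_getLast s.ne]
        congr 1
        have h := hsfl' s hsm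
        rw [Stmt9Aux.first_eq_headI] at h
        exact h.symm
      · rw [List.pairwise_map]
        exact hpair'.imp (fun {a b} hab => by rwa [← Stmt9Aux.first_eq_headI])
      · intro B hB v hv hm
        obtain ⟨s, hsm, rfl⟩ := List.mem_map.mp hB
        simp only [List.mem_singleton] at hm
        subst hm
        exact h3' s hsm v (by simp) hv
    have hbseq : ss'.map QWalk.verts = bs := Stmt9Aux.dec_unique hdec' hdec
    have hsseq : ss' = ss := by
      apply List.map_injective_iff.mpr (fun a b h => Stmt9Aux.qwalk_ext h)
      rw [hbseq, hss]
    have hgeq : g' = g := by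
      apply Stmt9Aux.qwalk_ext
      rw [hg'v, hsseq, hmapfirst]
    rw [Prod.ext_iff]
    exact ⟨hgeq, hsseq⟩
end

section
/- Path-sum formula for closed walks: let G be a finite quiver with vertex set V and let α ∈ V. Then, in the ring ℚ[[z]] of formal power series, the generating function Σ_{n≥0} c_n z^n, where c_n is the number of walks of length n from α to α on G, equals the dressed-vertex series F_V(α). -/
/-- The number of walks of length `n` from `α` to `ω` on the quiver with edge
relation `E`: walks are recorded by their vertex sequences, lists of `n + 1`
vertices starting at `α`, ending at `ω`, with consecutive vertices joined by edges. -/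
noncomputable def nWalks {V : Type} (E : V → V → Prop) (n : ℕ) (α ω : V) : ℕ :=
  Nat.card {L : List V // L.length = n + 1 ∧ L.head? = some α ∧
    L.getLast? = some ω ∧ L.Chain' E}

/-- Given a family `F` of dressed-vertex series, `dressProd F T [σ₀, …, σₖ]` is the
product `F T σ₀ · F (T ∖ {σ₀}) σ₁ ⋯ F (T ∖ {σ₀, …, σ_{k-1}}) σₖ`. -/
noncomputable def dressProd {V : Type} [DecidableEq V]
    (F : Finset V → V → PowerSeries ℚ) : Finset V → List V → PowerSeries ℚ
  | _, [] => 1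
  | T, v :: r => F T v * dressProd F (T.erase v) r

/-- Fuel-graded version of the dressed-vertex series `F_S(α)`:
`F_S(α) = (1 − Σ_γ z^m · F_{S∖{α}}(μ₂) ⋯ F_{S∖{α,μ₂,…,μ_{m-1}}}(μ_m))⁻¹`,
the sum running over all nontrivial simple cycles `γ = (α μ₂ ⋯ μ_m α)` of the
induced subquiver `G[S]`, recorded by their lists `[μ₂, …, μ_m]` of internal
vertices (of length `m − 1`). -/
noncomputable def dressFAux {V : Type} [DecidableEq V] (E : V → V → Prop) :
    ℕ → Finset V → V → PowerSeries ℚ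
  | 0, _, _ => 1
  | n + 1, S, α =>
      (1 - ∑ᶠ c ∈ {c : List V | c.Nodup ∧ α ∉ c ∧ (∀ v ∈ c, v ∈ S) ∧
            List.Chain E α (c ++ [α])},
          (PowerSeries.X : PowerSeries ℚ) ^ (c.length + 1) *
            dressProd (dressFAux E n) (S.erase α) c)⁻¹

/-- The dressed-vertex series `F_S(α)` of the vertex `α` on the induced subquiver
`G[S]`.  (The fuel `S.card` is enough for the recursion to unfold completely.) -/
noncomputable def dressF {V : Type} [DecidableEq V] (E : V → V → Prop)
    (S : Finset V) (α : V) : PowerSeries ℚ :=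
  dressFAux E S.card S α

open PowerSeries

namespace Stmt10

variable {V : Type} [Fintype V] [DecidableEq V]

instance chainDecI {E : V → V → Prop} [DecidableRel E] (a : V) (l : List V) :
    Decidable (List.Chain E a l) :=
  inferInstanceAs (Decidable ((a :: l).IsChain E))

instance chain'DecI {E : V → V → Prop} [DecidableRel E] (l : List V) :
    Decidable (List.Chain' E l) :=
  inferInstanceAs (Decidable (l.IsChain E))

/-- All lists over `V` of length `n`. -/
def listsLen (V : Type) [Fintype V] [DecidableEq V] : ℕ → Finset (List V)
  | 0 => {[]}
  | n + 1 => Finset.univ.biUnion fun v => (listsLen V n).image (v :: ·)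

lemma mem_listsLen : ∀ (n : ℕ) (c : List V), c.length = n → c ∈ listsLen V n := by
  intro n
  induction n with
  | zero => intro c hc; simp [List.length_eq_zero_iff.1 hc, listsLen]
  | succ n ih =>
      intro c hc
      match c with
      | v :: r =>
          simp only [listsLen, Finset.mem_biUnion, Finset.mem_univ, true_and]
          exact ⟨v, Finset.mem_image.2 ⟨r, ih r (by simpa using hc), rfl⟩⟩

/-- All nodup lists live in this finset. -/
def listsLe (V : Type) [Fintype V] [DecidableEq V] : Finset (List V) :=
  (Finset.range (Fintype.card V + 1)).biUnion (listsLen V)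

lemma mem_listsLe {c : List V} (h : c.Nodup) : c ∈ listsLe V :=
  Finset.mem_biUnion.2 ⟨c.length,
    Finset.mem_range.2 (Nat.lt_succ_of_le h.length_le_card), mem_listsLen _ c rfl⟩

variable (E : V → V → Prop) [DecidableRel E]

/-- number of walks of `l` edges from `x` to `y` with all vertices in `U`. -/
def g (U : Finset V) : ℕ → V → V → ℕ
  | 0, x, y => if x = y ∧ x ∈ U then 1 else 0
  | l + 1, x, y => if y ∈ U then ∑ γ ∈ U, (if E γ y then g U l x γ else 0) else 0

variable {E}

lemma g_zero_right {U : Finset V} {y : V} (hy : y ∉ U) (l : ℕ) (x : V) :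
    g E U l x y = 0 := by
  cases l with
  | zero => simp only [g, ite_eq_right_iff]; rintro ⟨rfl, h⟩; exact absurd h hy
  | succ l => simp only [g, if_neg hy]

lemma g_zero_left {U : Finset V} {x : V} (hx : x ∉ U) :
    ∀ (l : ℕ) (y : V), g E U l x y = 0 := by
  intro l
  induction l with
  | zero => intro y; simp only [g, ite_eq_right_iff]; rintro ⟨rfl, h⟩; exact absurd h hx
  | succ l ih =>
      intro y
      simp only [g, ih, ite_self, Finset.sum_const_zero]

private lemma ite_sum_zero {c : Prop} [Decidable c] {α : Type} (s : Finset α) (f : α → ℕ) :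
    (if c then ∑ x ∈ s, f x else 0) = ∑ x ∈ s, (if c then f x else 0) := by
  split_ifs with h
  · rfl
  · exact Finset.sum_const_zero.symm

private lemma ite_swap (c d : Prop) [Decidable c] [Decidable d] (a : ℕ) :
    (if c then if d then a else 0 else 0) = (if d then if c then a else 0 else 0) := by
  split_ifs <;> rfl

lemma g_first (U : Finset V) :
    ∀ (l : ℕ) (x y : V), g E U (l + 1) x y =
      if x ∈ U then ∑ γ ∈ U, (if E x γ then g E U l γ y else 0) else 0 := by
  intro l
  induction l with
  | zero =>
      intro x y
      show (if y ∈ U then ∑ γ ∈ U, (if E γ y then g E U 0 x γ else 0) else 0) = _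
      have h1 : ∀ γ ∈ U, (if E γ y then g E U 0 x γ else 0)
          = if γ = x then (if E x y ∧ x ∈ U then 1 else 0) else 0 := by
        intro γ _
        show (if E γ y then (if x = γ ∧ x ∈ U then 1 else 0) else 0) = _
        by_cases hγ : γ = x
        · subst hγ
          by_cases hE : E γ y <;> by_cases hU : γ ∈ U <;> simp [hE, hU]
        · have hne : ¬(x = γ ∧ x ∈ U) := fun h => hγ h.1.symm
          simp [hγ, hne]
      have h2 : ∀ γ ∈ U, (if E x γ then g E U 0 γ y else 0)
          = if γ = y then (if E x y ∧ y ∈ U then 1 else 0) else 0 := by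
        intro γ _
        show (if E x γ then (if γ = y ∧ γ ∈ U then 1 else 0) else 0) = _
        by_cases hγ : γ = y
        · subst hγ
          by_cases hE : E x γ <;> by_cases hU : γ ∈ U <;> simp [hE, hU]
        · have hne : ¬(γ = y ∧ γ ∈ U) := fun h => hγ h.1
          simp [hγ, hne]
      rw [show (∑ γ ∈ U, (if E γ y then g E U 0 x γ else 0))
            = if x ∈ U then (if E x y ∧ x ∈ U then 1 else 0) else 0 from
          (Finset.sum_congr rfl h1).trans (Finset.sum_ite_eq' U x _)]
      rw [show (∑ γ ∈ U, (if E x γ then g E U 0 γ y else 0))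
            = if y ∈ U then (if E x y ∧ y ∈ U then 1 else 0) else 0 from
          (Finset.sum_congr rfl h2).trans (Finset.sum_ite_eq' U y _)]
      by_cases hx : x ∈ U <;> by_cases hy : y ∈ U <;> simp [hx, hy]
  | succ l ih =>
      intro x y
      show (if y ∈ U then ∑ γ ∈ U, (if E γ y then g E U (l+1) x γ else 0) else 0) = _
      have hR : ∀ β, g E U (l+1) β y
          = if y ∈ U then ∑ γ ∈ U, (if E γ y then g E U l β γ else 0) else 0 := fun β => rfl
      by_cases hx : x ∈ U
      · rw [if_pos hx]
        by_cases hy : y ∈ U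
        · rw [if_pos hy]
          have hLHS : (∑ γ ∈ U, (if E γ y then g E U (l+1) x γ else 0))
              = ∑ γ ∈ U, ∑ β ∈ U, (if E γ y then (if E x β then g E U l β γ else 0) else 0) :=
            Finset.sum_congr rfl fun γ _ => by rw [ih, if_pos hx, ite_sum_zero]
          have hRHS : (∑ β ∈ U, (if E x β then g E U (l+1) β y else 0))
              = ∑ β ∈ U, ∑ γ ∈ U, (if E x β then (if E γ y then g E U l β γ else 0) else 0) :=
            Finset.sum_congr rfl fun β _ => by rw [hR β, if_pos hy, ite_sum_zero]
          rw [hLHS, hRHS, Finset.sum_comm]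
          exact Finset.sum_congr rfl fun β _ => Finset.sum_congr rfl fun γ _ =>
            ite_swap _ _ _
        · rw [if_neg hy]
          have h0 : (∑ β ∈ U, (if E x β then g E U (l+1) β y else 0)) = 0 :=
            Finset.sum_eq_zero fun β _ => by rw [hR β, if_neg hy, ite_self]
          rw [h0]
      · rw [if_neg hx]
        have h0 : (∑ γ ∈ U, (if E γ y then g E U (l+1) x γ else 0)) = 0 :=
          Finset.sum_eq_zero fun γ _ => by rw [ih, if_neg hx, ite_self]
        rw [h0, ite_self]

variable (E)

/-- number of walks of `l` edges from `x` to `y` in `U` which do not return to `x`. -/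
def g' (U : Finset V) : ℕ → V → V → ℕ
  | 0, x, y => if x = y ∧ x ∈ U then 1 else 0
  | l + 1, x, y =>
      if x ∈ U then ∑ γ ∈ U.erase x, (if E x γ then g E (U.erase x) l γ y else 0) else 0

variable {E}

lemma g'_self (U : Finset V) (l : ℕ) (x : V) : g' E U (l + 1) x x = 0 := by
  show (if x ∈ U then ∑ γ ∈ U.erase x, (if E x γ then g E (U.erase x) l γ x else 0) else 0) = 0
  have h0 : (∑ γ ∈ U.erase x, (if E x γ then g E (U.erase x) l γ x else 0)) = 0 :=
    Finset.sum_eq_zero fun γ _ => by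
      rw [g_zero_right (Finset.notMem_erase x U), ite_self]
  rw [h0, ite_self]

lemma g'_last (U : Finset V) :
    ∀ (l : ℕ) (x y : V), g' E U (l + 1) x y =
      if y ∈ U ∧ y ≠ x then ∑ γ ∈ U, (if E γ y then g' E U l x γ else 0) else 0 := by
  intro l
  cases l with
  | zero =>
      intro x y
      show (if x ∈ U then ∑ γ ∈ U.erase x, (if E x γ then g E (U.erase x) 0 γ y else 0) else 0) = _
      have h1 : ∀ γ ∈ U.erase x, (if E x γ then g E (U.erase x) 0 γ y else 0)
          = if γ = y then (if E x y ∧ y ∈ U.erase x then 1 else 0) else 0 := by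
        intro γ _
        show (if E x γ then (if γ = y ∧ γ ∈ U.erase x then 1 else 0) else 0) = _
        by_cases hγ : γ = y
        · subst hγ
          by_cases hE : E x γ <;> by_cases hU : γ ∈ U.erase x <;> simp [hE, hU]
        · have hne : ¬(γ = y ∧ γ ∈ U.erase x) := fun h => hγ h.1
          simp [hγ, hne]
      have h2 : ∀ γ ∈ U, (if E γ y then g' E U 0 x γ else 0)
          = if γ = x then (if E x y ∧ x ∈ U then 1 else 0) else 0 := by
        intro γ _
        show (if E γ y then (if x = γ ∧ x ∈ U then 1 else 0) else 0) = _
        by_cases hγ : γ = x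
        · subst hγ
          by_cases hE : E γ y <;> by_cases hU : γ ∈ U <;> simp [hE, hU]
        · have hne : ¬(x = γ ∧ x ∈ U) := fun h => hγ h.1.symm
          simp [hγ, hne]
      rw [(Finset.sum_congr rfl h1).trans (Finset.sum_ite_eq' (U.erase x) y _)]
      conv_rhs => rw [(Finset.sum_congr rfl h2).trans (Finset.sum_ite_eq' U x _)]
      by_cases hx : x ∈ U <;> by_cases hy : y ∈ U <;> by_cases hxy : y = x <;>
        by_cases hE : E x y <;> simp [hx, hy, hxy, hE, Finset.mem_erase]
  | succ m =>
      intro x y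
      show (if x ∈ U then
          ∑ β ∈ U.erase x, (if E x β then g E (U.erase x) (m+1) β y else 0) else 0) = _
      by_cases hx : x ∈ U
      · rw [if_pos hx]
        by_cases hy : y ∈ U ∧ y ≠ x
        · rw [if_pos hy]
          have hyx : y ∈ U.erase x := Finset.mem_erase.2 ⟨hy.2, hy.1⟩
          have hLHS : (∑ β ∈ U.erase x, (if E x β then g E (U.erase x) (m+1) β y else 0))
              = ∑ β ∈ U.erase x, ∑ γ ∈ U.erase x,
                  (if E x β then (if E γ y then g E (U.erase x) m β γ else 0) else 0) :=
            Finset.sum_congr rfl fun β _ => by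
              rw [show g E (U.erase x) (m+1) β y = (if y ∈ U.erase x then
                    ∑ γ ∈ U.erase x, (if E γ y then g E (U.erase x) m β γ else 0) else 0)
                  from rfl,
                if_pos hyx, ite_sum_zero]
          have hsub : (∑ γ ∈ U.erase x, (if E γ y then g' E U (m+1) x γ else 0))
              = ∑ γ ∈ U, (if E γ y then g' E U (m+1) x γ else 0) :=
            Finset.sum_subset (Finset.erase_subset x U) (fun γ hγU hγ => by
              have : γ = x := by
                by_contra hne
                exact hγ (Finset.mem_erase.2 ⟨hne, hγU⟩)
              subst this
              rw [g'_self, ite_self])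
          rw [← hsub]
          have hRHS : (∑ γ ∈ U.erase x, (if E γ y then g' E U (m+1) x γ else 0))
              = ∑ γ ∈ U.erase x, ∑ β ∈ U.erase x,
                  (if E γ y then (if E x β then g E (U.erase x) m β γ else 0) else 0) :=
            Finset.sum_congr rfl fun γ _ => by
              rw [show g' E U (m+1) x γ = (if x ∈ U then
                    ∑ β ∈ U.erase x, (if E x β then g E (U.erase x) m β γ else 0) else 0)
                  from rfl,
                if_pos hx, ite_sum_zero]
          rw [hLHS, hRHS, Finset.sum_comm]
          exact Finset.sum_congr rfl fun γ _ => Finset.sum_congr rfl fun β _ =>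
            ite_swap _ _ _
        · rw [if_neg hy]
          have hyx : y ∉ U.erase x := fun h => hy ⟨Finset.mem_of_mem_erase h,
            (Finset.mem_erase.1 h).1⟩
          exact Finset.sum_eq_zero fun β _ => by
            rw [g_zero_right hyx, ite_self]
      · rw [if_neg hx]
        have h0 : ∀ γ ∈ U, (if E γ y then g' E U (m+1) x γ else 0) = 0 := fun γ _ => by
          rw [show g' E U (m+1) x γ = (if x ∈ U then
                ∑ β ∈ U.erase x, (if E x β then g E (U.erase x) m β γ else 0) else 0)
              from rfl,
            if_neg hx, ite_self]
        rw [Finset.sum_eq_zero h0, ite_self]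

lemma lastOcc (U : Finset V) (β : V) :
    ∀ (n : ℕ) (δ : V), g E U n β δ
      = ∑ k ∈ Finset.range (n + 1), g E U k β β * g' E U (n - k) β δ := by
  intro n
  induction n with
  | zero =>
      intro δ
      rw [Finset.sum_range_one]
      show (if β = δ ∧ β ∈ U then 1 else 0)
          = (if β = β ∧ β ∈ U then 1 else 0) * (if β = δ ∧ β ∈ U then 1 else 0)
      by_cases h : β ∈ U <;> by_cases h2 : β = δ <;> subst_eqs <;> split_ifs <;> simp_all
  | succ n ih =>
      intro δ
      rw [Finset.sum_range_succ]
      have hlast : ∀ k ∈ Finset.range (n + 1),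
          g E U k β β * g' E U (n + 1 - k) β δ
          = if δ ∈ U ∧ δ ≠ β then
              ∑ γ ∈ U, (if E γ δ then g E U k β β * g' E U (n - k) β γ else 0) else 0 := by
        intro k hk
        have hk' : n + 1 - k = (n - k) + 1 := by
          have := Finset.mem_range.1 hk; omega
        rw [hk', g'_last]
        split_ifs
        · rw [Finset.mul_sum]
          exact Finset.sum_congr rfl fun γ _ => by rw [mul_ite, mul_zero]
        · exact mul_zero _
      rw [Finset.sum_congr rfl hlast, ← ite_sum_zero (Finset.range (n + 1)) _,
        Finset.sum_comm]
      have hinner : (∑ γ ∈ U, ∑ k ∈ Finset.range (n + 1),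
            (if E γ δ then g E U k β β * g' E U (n - k) β γ else 0))
          = ∑ γ ∈ U, (if E γ δ then g E U n β γ else 0) :=
        Finset.sum_congr rfl fun γ _ => by
          rw [← ite_sum_zero (Finset.range (n + 1)) _, ← ih γ]
      rw [hinner, Nat.sub_self,
        show g' E U 0 β δ = (if β = δ ∧ β ∈ U then 1 else 0) from rfl]
      show g E U (n + 1) β δ = _
      by_cases hδβ : δ = β
      · subst hδβ
        have : ¬ (δ ∈ U ∧ δ ≠ δ) := fun h => h.2 rfl
        rw [if_neg this, zero_add]
        by_cases hU : δ ∈ U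
        · simp [hU]
        · rw [g_zero_left hU]
          simp [hU]
      · have hne : ¬ (β = δ ∧ β ∈ U) := fun h => hδβ h.1.symm
        rw [if_neg hne, mul_zero, add_zero]
        show (if δ ∈ U then ∑ γ ∈ U, (if E γ δ then g E U n β γ else 0) else 0) = _
        by_cases hU : δ ∈ U
        · rw [if_pos hU, if_pos ⟨hU, hδβ⟩]
        · rw [if_neg hU, if_neg (fun h => hU h.1)]

variable (E)

/-- Generating function of walks from `x` to `y` within `U`. -/
noncomputable def Gs (U : Finset V) (x y : V) : PowerSeries ℚ :=
  PowerSeries.mk fun n => (g E U n x y : ℚ)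

/-- Generating function of walks from `x` to `y` within `U` not returning to `x`. -/
noncomputable def Gs' (U : Finset V) (x y : V) : PowerSeries ℚ :=
  PowerSeries.mk fun n => (g' E U n x y : ℚ)

/-- First-return generating function. -/
noncomputable def Rser (U : Finset V) (α : V) : PowerSeries ℚ :=
  X * PowerSeries.mk fun l =>
    ((∑ γ ∈ U, if E γ α then g' E U l α γ else 0 : ℕ) : ℚ)

variable {E}

lemma L1 (U : Finset V) (β δ : V) : Gs E U β δ = Gs E U β β * Gs' E U β δ := by
  ext n
  rw [coeff_mul, Finset.Nat.sum_antidiagonal_eq_sum_range_succ_mk]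
  simp only [Gs, Gs', coeff_mk]
  exact_mod_cast congrArg (Nat.cast : ℕ → ℚ) (lastOcc (E := E) U β n δ)

lemma L2 (U : Finset V) (β δ : V) :
    Gs' E U β δ = (if β = δ ∧ β ∈ U then 1 else 0) +
      (if β ∈ U then 1 else 0) * X *
        ∑ β' ∈ U.erase β, (if E β β' then Gs E (U.erase β) β' δ else 0) := by
  ext n
  rw [map_add]
  cases n with
  | zero =>
      have h2 : (coeff 0) ((if β ∈ U then 1 else 0) * X *
          ∑ β' ∈ U.erase β, (if E β β' then Gs E (U.erase β) β' δ else 0)) = 0 := by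
        rw [mul_assoc, coeff_zero_eq_constantCoeff, map_mul, map_mul, constantCoeff_X,
          zero_mul, mul_zero]
      rw [h2, add_zero]
      simp only [Gs', coeff_mk]
      show ((if β = δ ∧ β ∈ U then 1 else 0 : ℕ) : ℚ) = _
      split_ifs <;> simp
  | succ n =>
      have h1 : (coeff (n+1)) ((if β = δ ∧ β ∈ U then (1 : PowerSeries ℚ) else 0)) = 0 := by
        split_ifs <;> simp
      rw [h1, zero_add]
      have h2 : (if β ∈ U then (1 : PowerSeries ℚ) else 0) * X *
          (∑ β' ∈ U.erase β, (if E β β' then Gs E (U.erase β) β' δ else 0))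
          = X * ((if β ∈ U then (1:PowerSeries ℚ) else 0) *
            ∑ β' ∈ U.erase β, (if E β β' then Gs E (U.erase β) β' δ else 0)) := by ring
      rw [h2, coeff_succ_X_mul]
      simp only [Gs', Gs, coeff_mk]
      show ((g' E U (n+1) β δ : ℕ) : ℚ) = _
      rw [show g' E U (n+1) β δ = (if β ∈ U then
            ∑ γ ∈ U.erase β, (if E β γ then g E (U.erase β) n γ δ else 0) else 0) from rfl]
      rw [ite_mul, one_mul, zero_mul]
      by_cases hβ : β ∈ U
      · rw [if_pos hβ, if_pos hβ, map_sum, Nat.cast_sum]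
        refine Finset.sum_congr rfl fun γ _ => ?_
        split_ifs with h
        · simp
        · simp
      · rw [if_neg hβ, if_neg hβ, map_zero, Nat.cast_zero]

lemma closed_walk_rec (U : Finset V) (α : V) (hα : α ∈ U) (n : ℕ) :
    g E U (n + 1) α α = ∑ k ∈ Finset.range (n + 1),
      g E U k α α * (∑ γ ∈ U, if E γ α then g' E U (n - k) α γ else 0) := by
  show (if α ∈ U then ∑ γ ∈ U, (if E γ α then g E U n α γ else 0) else 0) = _
  rw [if_pos hα]
  have h1 : ∀ γ ∈ U, (if E γ α then g E U n α γ else 0)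
      = ∑ k ∈ Finset.range (n + 1),
          (if E γ α then g E U k α α * g' E U (n - k) α γ else 0) := fun γ _ => by
    rw [lastOcc U α n γ, ite_sum_zero]
  rw [Finset.sum_congr rfl h1, Finset.sum_comm]
  refine Finset.sum_congr rfl fun k _ => ?_
  rw [Finset.mul_sum]
  exact Finset.sum_congr rfl fun γ _ => by rw [mul_ite, mul_zero]

lemma W_eq (U : Finset V) (α : V) (h : α ∈ U) :
    Gs E U α α = 1 + Gs E U α α * Rser E U α := by
  ext n
  rw [map_add]
  cases n with
  | zero =>
      have hR : (coeff 0) (Gs E U α α * Rser E U α) = 0 := by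
        rw [coeff_zero_eq_constantCoeff, map_mul]
        simp only [Rser]
        rw [map_mul, constantCoeff_X, zero_mul, mul_zero]
      rw [hR, add_zero]
      simp [Gs, coeff_mk, coeff_one, g, h]
  | succ n =>
      have h1 : (coeff (n + 1)) (1 : PowerSeries ℚ) = 0 := by
        rw [coeff_one]; simp
      rw [h1, zero_add]
      simp only [Rser]
      rw [mul_left_comm, coeff_succ_X_mul, coeff_mul,
        Finset.Nat.sum_antidiagonal_eq_sum_range_succ_mk]
      simp only [Gs, coeff_mk]
      exact_mod_cast congrArg (Nat.cast : ℕ → ℚ) (closed_walk_rec U α h n)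

lemma W_inv (U : Finset V) (α : V) (h : α ∈ U) :
    Gs E U α α = (1 - Rser E U α)⁻¹ := by
  have hc : constantCoeff (1 - Rser E U α) ≠ 0 := by
    rw [map_sub, map_one]
    simp only [Rser]
    rw [map_mul, constantCoeff_X, zero_mul, sub_zero]
    exact one_ne_zero
  rw [PowerSeries.eq_inv_iff_mul_eq_one hc]
  have := W_eq U α h (E := E)
  rw [mul_sub, mul_one]
  linear_combination this

variable (E)

/-- Simple paths from `β` to `δ` inside `T`, as a finset. -/
noncomputable def SPf (T : Finset V) (β δ : V) : Finset (List V) :=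
  (listsLe V).filter fun p => p ≠ [] ∧ p.Nodup ∧ (∀ v ∈ p, v ∈ T) ∧
    p.head? = some β ∧ p.getLast? = some δ ∧ p.Chain' E

variable {E}

lemma mem_SPf {T : Finset V} {β δ : V} {p : List V} :
    p ∈ SPf E T β δ ↔ p ≠ [] ∧ p.Nodup ∧ (∀ v ∈ p, v ∈ T) ∧
      p.head? = some β ∧ p.getLast? = some δ ∧ p.Chain' E :=
  ⟨fun h => (Finset.mem_filter.1 h).2,
   fun h => Finset.mem_filter.2 ⟨mem_listsLe h.2.1, h⟩⟩

lemma SPf_decomp (T : Finset V) (β δ : V) :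
    SPf E T β δ = (if β = δ ∧ β ∈ T then {[β]} else ∅) ∪
      (T.erase β).biUnion (fun β' => if E β β' ∧ β ∈ T
        then (SPf E (T.erase β) β' δ).image (β :: ·) else ∅) := by
  ext p
  rw [Finset.mem_union, mem_SPf]
  constructor
  · rintro ⟨hne, hnd, hmem, hhd, hlast, hch⟩
    match p, hne with
    | v :: q, _ =>
      have hv : v = β := by simpa using hhd
      subst hv
      match q with
      | [] =>
          left
          have hδ : v = δ := by simpa using hlast
          rw [if_pos ⟨hδ, hmem v (by simp)⟩]
          simp
      | w :: r =>
          right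
          have hvq : v ∉ w :: r := (List.nodup_cons.1 hnd).1
          have hwT : w ∈ T.erase v :=
            Finset.mem_erase.2 ⟨by rintro rfl; exact hvq (by simp), hmem w (by simp)⟩
          refine Finset.mem_biUnion.2 ⟨w, hwT, ?_⟩
          rw [if_pos ⟨(List.isChain_cons_cons.1 hch).1, hmem v (by simp)⟩]
          refine Finset.mem_image.2 ⟨w :: r, mem_SPf.2 ⟨by simp, (List.nodup_cons.1 hnd).2,
            ?_, rfl, by simpa [List.getLast?_cons_cons] using hlast,
            (List.isChain_cons_cons.1 hch).2⟩, rfl⟩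
          intro u hu
          exact Finset.mem_erase.2 ⟨by rintro rfl; exact hvq hu, hmem u (by simp [hu])⟩
  · rintro (h | h)
    · split_ifs at h with hc
      · have hp : p = [β] := by simpa using h
        subst hp
        rcases hc with ⟨rfl, hT⟩
        exact ⟨by simp, by simp, by simpa using hT, by simp, by simp, by simp [List.Chain']⟩
      · simp at h
    · obtain ⟨β', hβ', hp⟩ := Finset.mem_biUnion.1 h
      split_ifs at hp with hc
      · obtain ⟨q, hq, rfl⟩ := Finset.mem_image.1 hp
        obtain ⟨hqne, hqnd, hqmem, hqhd, hqlast, hqch⟩ := mem_SPf.1 hq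
        have hβq : β ∉ q := fun hin => (Finset.mem_erase.1 (hqmem β hin)).1 rfl
        refine ⟨by simp, List.nodup_cons.2 ⟨hβq, hqnd⟩, ?_, by simp, ?_, ?_⟩
        · intro u hu
          rcases List.mem_cons.1 hu with rfl | hu
          · exact hc.2
          · exact Finset.mem_of_mem_erase (hqmem u hu)
        · match q, hqne with
          | w :: r, _ => simpa [List.getLast?_cons_cons] using hqlast
        · match q, hqne with
          | w :: r, _ =>
              have hw : w = β' := by simpa using hqhd
              subst hw
              exact List.isChain_cons_cons.2 ⟨hc.1, hqch⟩
      · simp at hp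

/-- Path-sum formula for the walk generating function. -/
lemma pathSum : ∀ (T : Finset V) (β δ : V),
    Gs E T β δ = ∑ p ∈ SPf E T β δ,
      X ^ (p.length - 1) * dressProd (fun T' v => Gs E T' v v) T p := by
  intro T
  induction T using Finset.strongInductionOn with
  | _ T ih =>
    intro β δ
    set F : Finset V → V → PowerSeries ℚ := fun T' v => Gs E T' v v with hF
    have hright : ∀ p ∈ (T.erase β).biUnion (fun β' => if E β β' ∧ β ∈ T
        then (SPf E (T.erase β) β' δ).image (β :: ·) else ∅), 2 ≤ p.length := by
      intro p hp
      obtain ⟨β', _, hp⟩ := Finset.mem_biUnion.1 hp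
      split_ifs at hp with hc
      · obtain ⟨q, hq, rfl⟩ := Finset.mem_image.1 hp
        have hq1 := (mem_SPf.1 hq).1
        cases q with
        | nil => exact absurd rfl hq1
        | cons a b => simp
      · simp at hp
    have hdisj : Disjoint (if β = δ ∧ β ∈ T then ({[β]} : Finset (List V)) else ∅)
        ((T.erase β).biUnion (fun β' => if E β β' ∧ β ∈ T
          then (SPf E (T.erase β) β' δ).image (β :: ·) else ∅)) := by
      rw [Finset.disjoint_left]
      intro p hp hp'
      have h2 := hright p hp'
      split_ifs at hp with hc
      · rw [Finset.mem_singleton.1 hp] at h2; simp at h2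
      · simp at hp
    have hpair : (↑(T.erase β) : Set V).PairwiseDisjoint (fun β' => if E β β' ∧ β ∈ T
        then (SPf E (T.erase β) β' δ).image (β :: ·) else ∅) := by
      intro a _ b _ hab
      rw [Function.onFun, Finset.disjoint_left]
      intro p hp hp'
      split_ifs at hp hp' with h1 h2
      · obtain ⟨q, hq, rfl⟩ := Finset.mem_image.1 hp
        obtain ⟨q', hq', heq⟩ := Finset.mem_image.1 hp'
        have hqq : q' = q := by simpa using heq
        subst hqq
        have e1 := (mem_SPf.1 hq).2.2.2.1
        have e2 := (mem_SPf.1 hq').2.2.2.1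
        rw [e1] at e2
        exact hab (Option.some_injective _ e2)
      · simp at hp'
      · simp at hp
      · simp at hp
    rw [SPf_decomp, Finset.sum_union hdisj, Finset.sum_biUnion hpair,
      L1 T β δ, L2 T β δ, mul_add]
    congr 1
    · split_ifs with hc
      · rw [Finset.sum_singleton, mul_one]
        refine Eq.symm ?_
        show X ^ 0 * (F T β * dressProd F ((T.erase β)) []) = F T β
        show X ^ 0 * (F T β * 1) = F T β
        rw [pow_zero, one_mul, mul_one]
      · rw [Finset.sum_empty, mul_zero]
    · rw [show Gs E T β β * ((if β ∈ T then (1:PowerSeries ℚ) else 0) * X *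
          ∑ β' ∈ T.erase β, (if E β β' then Gs E (T.erase β) β' δ else 0))
          = ∑ β' ∈ T.erase β, (Gs E T β β * ((if β ∈ T then (1:PowerSeries ℚ) else 0) * X) *
              (if E β β' then Gs E (T.erase β) β' δ else 0)) by
        rw [Finset.mul_sum, Finset.mul_sum]
        exact Finset.sum_congr rfl fun β' _ => by ring]
      refine Finset.sum_congr rfl fun β' hβ' => ?_
      by_cases hE : E β β' <;> by_cases hT : β ∈ T
      · rw [if_pos (show E β β' ∧ β ∈ T from ⟨hE, hT⟩), if_pos hT, if_pos hE]
        have hinj : ∀ q1 ∈ SPf E (T.erase β) β' δ, ∀ q2 ∈ SPf E (T.erase β) β' δ,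
            β :: q1 = β :: q2 → q1 = q2 := fun q1 _ q2 _ h => by simpa using h
        rw [Finset.sum_image hinj, ih (T.erase β) (Finset.erase_ssubset hT) β' δ,
          Finset.mul_sum]
        refine Finset.sum_congr rfl fun q hq => Eq.symm ?_
        have hqne := (mem_SPf.1 hq).1
        have hlen : q.length = (q.length - 1) + 1 :=
          (Nat.succ_pred_eq_of_pos (List.length_pos_iff.2 hqne)).symm
        obtain ⟨m, hm⟩ : ∃ m, q.length = m + 1 := ⟨q.length - 1, hlen⟩
        show X ^ ((β :: q).length - 1) * (F T β * dressProd F (T.erase β) q) = _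
        rw [List.length_cons, hm, hF]
        simp only [Nat.add_sub_cancel]
        rw [pow_succ]
        ring
      · rw [if_neg hT, if_neg (show ¬(E β β' ∧ β ∈ T) from fun h => hT h.2),
          Finset.sum_empty]
        ring
      · rw [if_neg hE, if_neg (show ¬(E β β' ∧ β ∈ T) from fun h => hE h.1),
          Finset.sum_empty]
        ring
      · rw [if_neg hE, if_neg (show ¬(E β β' ∧ β ∈ T) from fun h => hE h.1),
          Finset.sum_empty]
        ring

variable (E)

/-- Simple cycles off `α` within `S`, recorded by internal vertex lists. -/
noncomputable def CycF (S : Finset V) (α : V) : Finset (List V) :=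
  (listsLe V).filter fun c => c.Nodup ∧ α ∉ c ∧ (∀ v ∈ c, v ∈ S) ∧
    List.Chain E α (c ++ [α])

variable {E}

lemma mem_CycF {S : Finset V} {α : V} {c : List V} :
    c ∈ CycF E S α ↔ c.Nodup ∧ α ∉ c ∧ (∀ v ∈ c, v ∈ S) ∧ List.Chain E α (c ++ [α]) :=
  ⟨fun h => (Finset.mem_filter.1 h).2,
   fun h => Finset.mem_filter.2 ⟨mem_listsLe h.1, h⟩⟩

lemma CycF_decomp (S : Finset V) (α : V) :
    CycF E S α = (if E α α then {([] : List V)} else ∅) ∪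
      ((S.erase α) ×ˢ (S.erase α)).biUnion (fun bg =>
        if E α bg.1 ∧ E bg.2 α then SPf E (S.erase α) bg.1 bg.2 else ∅) := by
  ext c
  rw [Finset.mem_union, mem_CycF]
  constructor
  · rintro ⟨hnd, hα, hmem, hch⟩
    cases c with
    | nil =>
        left
        have hE : E α α := by
          have := hch
          simp only [List.nil_append] at this
          exact (List.chain_cons.1 this).1
        rw [if_pos hE]
        simp
    | cons v r =>
        right
        have h2 : List.IsChain E ((α :: v :: r) ++ [α]) := hch
        rw [List.isChain_append] at h2
        obtain ⟨hc1, -, hc3⟩ := h2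
        have hEαv : E α v := (List.isChain_cons_cons.1 hc1).1
        have hc1' : List.Chain' E (v :: r) := (List.isChain_cons_cons.1 hc1).2
        have hlast : (v :: r).getLast? = some ((v :: r).getLast (by simp)) :=
          List.getLast?_eq_getLast _
        set γ := (v :: r).getLast (by simp) with hγ
        have hEγα : E γ α := by
          refine hc3 γ ?_ α rfl
          rw [List.getLast?_cons_cons, hlast]
          rfl
        have hsub : ∀ u ∈ v :: r, u ∈ S.erase α := fun u hu =>
          Finset.mem_erase.2 ⟨fun hh => hα (hh ▸ hu), hmem u hu⟩
        refine Finset.mem_biUnion.2 ⟨(v, γ), Finset.mem_product.2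
          ⟨hsub v (by simp), hsub γ (List.getLast_mem _)⟩, ?_⟩
        rw [if_pos ⟨hEαv, hEγα⟩]
        exact mem_SPf.2 ⟨by simp, hnd, hsub, rfl, hlast, hc1'⟩
  · rintro (h | h)
    · split_ifs at h with hc
      · have hcnil : c = [] := by simpa using h
        subst hcnil
        refine ⟨by simp, by simp, by simp, ?_⟩
        simp only [List.nil_append]
        exact List.chain_cons.2 ⟨hc, List.Chain.nil⟩
      · simp at h
    · obtain ⟨bg, hbg, hc⟩ := Finset.mem_biUnion.1 h
      split_ifs at hc with hE
      · obtain ⟨hne, hnd, hmem, hhd, hlast, hch⟩ := mem_SPf.1 hc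
        refine ⟨hnd, fun hin => (Finset.mem_erase.1 (hmem α hin)).1 rfl,
          fun u hu => Finset.mem_of_mem_erase (hmem u hu), ?_⟩
        show List.Chain' E (α :: (c ++ [α]))
        have : (α :: c) ++ [α] = α :: (c ++ [α]) := rfl
        rw [← this]
        refine List.isChain_append.2 ⟨?_, List.isChain_singleton α, ?_⟩
        · match c, hne with
          | v :: r, _ =>
              have hv : v = bg.1 := by simpa using hhd
              exact List.isChain_cons_cons.2 ⟨hv ▸ hE.1, hch⟩
        · intro x hx y hy
          have hy' : y = α := by have h := hy; simp at h; exact h.symm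
          match c, hne with
          | v :: r, _ =>
              rw [List.getLast?_cons_cons, hlast] at hx
              have hx' : x = bg.2 := by have h := hx; simp at h; exact h.symm
              rw [hx', hy']
              exact hE.2
      · simp at hc

lemma xprime_zero (S : Finset V) (α : V) (h : α ∈ S) :
    (∑ γ ∈ S, if E γ α then g' E S 0 α γ else 0) = if E α α then 1 else 0 := by
  have h1 : ∀ γ ∈ S, (if E γ α then g' E S 0 α γ else 0)
      = if γ = α then (if E α α then 1 else 0) else 0 := by
    intro γ _
    show (if E γ α then (if α = γ ∧ α ∈ S then 1 else 0) else 0) = _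
    by_cases hγ : γ = α
    · subst hγ; by_cases hE : E γ γ <;> simp [hE, h]
    · have hne : ¬(α = γ ∧ α ∈ S) := fun hh => hγ hh.1.symm
      simp [hγ, hne]
  rw [Finset.sum_congr rfl h1, Finset.sum_ite_eq' S α, if_pos h]

lemma xprime_succ (S : Finset V) (α : V) (h : α ∈ S) (l : ℕ) :
    (∑ γ ∈ S, if E γ α then g' E S (l + 1) α γ else 0)
      = ∑ bg ∈ (S.erase α) ×ˢ (S.erase α),
          (if E α bg.1 ∧ E bg.2 α then g E (S.erase α) l bg.1 bg.2 else 0) := by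
  have h1 : ∀ γ ∈ S, (if E γ α then g' E S (l + 1) α γ else 0)
      = ∑ β ∈ S.erase α,
          (if E γ α then (if E α β then g E (S.erase α) l β γ else 0) else 0) := by
    intro γ _
    rw [show g' E S (l + 1) α γ = (if α ∈ S then ∑ β ∈ S.erase α,
          (if E α β then g E (S.erase α) l β γ else 0) else 0) from rfl,
      if_pos h, ite_sum_zero]
  rw [Finset.sum_congr rfl h1]
  have h2 : (∑ γ ∈ S.erase α, ∑ β ∈ S.erase α,
        (if E γ α then (if E α β then g E (S.erase α) l β γ else 0) else 0))
      = ∑ γ ∈ S, ∑ β ∈ S.erase α,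
        (if E γ α then (if E α β then g E (S.erase α) l β γ else 0) else 0) := by
    refine Finset.sum_subset (Finset.erase_subset α S) fun γ hγS hγ => ?_
    have hγα : γ = α := by
      by_contra hne
      exact hγ (Finset.mem_erase.2 ⟨hne, hγS⟩)
    subst hγα
    refine Finset.sum_eq_zero fun β _ => ?_
    rw [g_zero_right (Finset.notMem_erase γ S) l β]
    split_ifs <;> rfl
  rw [← h2, Finset.sum_product, Finset.sum_comm]
  refine Finset.sum_congr rfl fun γ _ => Finset.sum_congr rfl fun β _ => ?_
  split_ifs with h1 h2 h3 <;> first | rfl | (exfalso; tauto)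

lemma cyc_sum (S : Finset V) (α : V) (h : α ∈ S) :
    Rser E S α = ∑ c ∈ CycF E S α,
      X ^ (c.length + 1) * dressProd (fun T v => Gs E T v v) (S.erase α) c := by
  set F := fun (T : Finset V) (v : V) => Gs E T v v with hF
  have hK : (PowerSeries.mk fun l =>
        ((∑ γ ∈ S, if E γ α then g' E S l α γ else 0 : ℕ) : ℚ))
      = (if E α α then 1 else 0)
        + X * ∑ bg ∈ (S.erase α) ×ˢ (S.erase α),
            (if E α bg.1 ∧ E bg.2 α then Gs E (S.erase α) bg.1 bg.2 else 0) := by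
    ext n
    rw [map_add]
    cases n with
    | zero =>
        have hz : (coeff 0) (X * ∑ bg ∈ (S.erase α) ×ˢ (S.erase α),
            (if E α bg.1 ∧ E bg.2 α then Gs E (S.erase α) bg.1 bg.2 else 0)) = 0 := by
          rw [coeff_zero_eq_constantCoeff, map_mul, constantCoeff_X, zero_mul]
        rw [hz, add_zero, coeff_mk, xprime_zero S α h]
        split_ifs <;> simp
    | succ l =>
        have h1 : (coeff (l + 1)) (if E α α then (1 : PowerSeries ℚ) else 0) = 0 := by
          split_ifs <;> simp
        rw [h1, zero_add, coeff_succ_X_mul, coeff_mk, xprime_succ S α h l, map_sum,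
          Nat.cast_sum]
        refine Finset.sum_congr rfl fun bg _ => ?_
        split_ifs
        · simp [Gs]
        · simp
  have inner : ∀ bg : V × V,
      (∑ c ∈ SPf E (S.erase α) bg.1 bg.2, X ^ (c.length + 1) * dressProd F (S.erase α) c)
        = X ^ 2 * Gs E (S.erase α) bg.1 bg.2 := by
    intro bg
    rw [pathSum (S.erase α) bg.1 bg.2, Finset.mul_sum]
    refine Finset.sum_congr rfl fun c hc => ?_
    have hcne := (mem_SPf.1 hc).1
    obtain ⟨m, hm⟩ : ∃ m, c.length = m + 1 :=
      ⟨c.length - 1, (Nat.succ_pred_eq_of_pos (List.length_pos_iff.2 hcne)).symm⟩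
    rw [hm]
    simp only [Nat.add_sub_cancel]
    rw [show m + 1 + 1 = m + 2 from rfl, pow_add]
    ring
  have hdisj : Disjoint (if E α α then ({([] : List V)} : Finset (List V)) else ∅)
      (((S.erase α) ×ˢ (S.erase α)).biUnion (fun bg =>
        if E α bg.1 ∧ E bg.2 α then SPf E (S.erase α) bg.1 bg.2 else ∅)) := by
    rw [Finset.disjoint_left]
    intro p hp hp'
    obtain ⟨bg, _, hp'⟩ := Finset.mem_biUnion.1 hp'
    split_ifs at hp hp' with h1 h2
    · have := (mem_SPf.1 hp').1
      rw [Finset.mem_singleton.1 hp] at this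
      exact this rfl
    · simp at hp'
    · simp at hp
    · simp at hp
  have hpair : (↑((S.erase α) ×ˢ (S.erase α)) : Set (V × V)).PairwiseDisjoint (fun bg =>
      if E α bg.1 ∧ E bg.2 α then SPf E (S.erase α) bg.1 bg.2 else ∅) := by
    intro a _ b _ hab
    rw [Function.onFun, Finset.disjoint_left]
    intro p hp hp'
    split_ifs at hp hp' with h1 h2
    · obtain ⟨-, -, -, e1, f1, -⟩ := mem_SPf.1 hp
      obtain ⟨-, -, -, e2, f2, -⟩ := mem_SPf.1 hp'
      rw [e1] at e2
      rw [f1] at f2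
      exact hab (Prod.ext (Option.some_injective _ e2) (Option.some_injective _ f2))
    · simp at hp'
    · simp at hp
    · simp at hp
  rw [CycF_decomp, Finset.sum_union hdisj, Finset.sum_biUnion hpair]
  rw [show Rser E S α = X * (PowerSeries.mk fun l =>
      ((∑ γ ∈ S, if E γ α then g' E S l α γ else 0 : ℕ) : ℚ)) from rfl, hK, mul_add]
  congr 1
  · split_ifs with hE
    · rw [Finset.sum_singleton, mul_one]
      show (X : PowerSeries ℚ) = X ^ ((0:ℕ) + 1) * dressProd F ((S.erase α)) []
      show (X : PowerSeries ℚ) = X ^ ((0:ℕ) + 1) * 1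
      rw [pow_one, mul_one]
    · rw [Finset.sum_empty, mul_zero]
  · rw [Finset.mul_sum, Finset.mul_sum]
    refine Finset.sum_congr rfl fun bg _ => ?_
    split_ifs with hc
    · rw [inner bg, ← mul_assoc]
      ring
    · rw [mul_zero, mul_zero, Finset.sum_empty]

lemma dressProd_congr (n : ℕ)
    (ih : ∀ (S : Finset V) (α : V), α ∈ S → S.card ≤ n → dressFAux E n S α = Gs E S α α) :
    ∀ (c : List V) (T : Finset V), c.Nodup → (∀ v ∈ c, v ∈ T) → T.card ≤ n →
      dressProd (dressFAux E n) T c = dressProd (fun T v => Gs E T v v) T c := by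
  intro c
  induction c with
  | nil => intro T _ _ _; rfl
  | cons v r ihc =>
      intro T hnd hmem hcard
      show dressFAux E n T v * dressProd (dressFAux E n) (T.erase v) r
        = Gs E T v v * dressProd (fun T v => Gs E T v v) (T.erase v) r
      rw [ih T v (hmem v (by simp)) hcard,
        ihc (T.erase v) (List.nodup_cons.1 hnd).2
          (fun u hu => Finset.mem_erase.2
            ⟨fun hh => (List.nodup_cons.1 hnd).1 (hh ▸ hu), hmem u (by simp [hu])⟩)
          (le_trans (Finset.card_le_card (Finset.erase_subset v T)) hcard)]

lemma main : ∀ (n : ℕ) (S : Finset V) (α : V), α ∈ S → S.card ≤ n →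
    dressFAux E n S α = Gs E S α α := by
  intro n
  induction n with
  | zero =>
      intro S α hα hc
      exact absurd (Finset.card_pos.2 ⟨α, hα⟩) (by omega)
  | succ n ih =>
      intro S α hα hc
      have hsetcoe : {c : List V | c.Nodup ∧ α ∉ c ∧ (∀ v ∈ c, v ∈ S) ∧
          List.Chain E α (c ++ [α])} = ↑(CycF E S α) := by
        ext c
        rw [Finset.mem_coe, mem_CycF]
        rfl
      have hcongr : ∀ c ∈ CycF E S α,
          X ^ (c.length + 1) * dressProd (dressFAux E n) (S.erase α) c
            = X ^ (c.length + 1) * dressProd (fun T v => Gs E T v v) (S.erase α) c := by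
        intro c hc
        obtain ⟨hnd, hαc, hmem, -⟩ := mem_CycF.1 hc
        congr 1
        refine dressProd_congr n ih c (S.erase α) hnd
          (fun v hv => Finset.mem_erase.2 ⟨fun hh => hαc (hh ▸ hv), hmem v hv⟩) ?_
        rw [Finset.card_erase_of_mem hα]
        omega
      rw [show dressFAux E (n + 1) S α
          = (1 - ∑ᶠ c ∈ {c : List V | c.Nodup ∧ α ∉ c ∧ (∀ v ∈ c, v ∈ S) ∧
              List.Chain E α (c ++ [α])},
            (PowerSeries.X : PowerSeries ℚ) ^ (c.length + 1) *
              dressProd (dressFAux E n) (S.erase α) c)⁻¹ from rfl]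
      rw [hsetcoe, finsum_mem_coe_finset, Finset.sum_congr rfl hcongr,
        ← cyc_sum S α hα]
      exact (W_inv S α hα).symm

variable (E)

/-- Finset of walks of `n` edges from `x` to `y`. -/
noncomputable def WFin : ℕ → V → V → Finset (List V)
  | 0, x, y => if x = y then {[x]} else ∅
  | n + 1, x, y => Finset.univ.biUnion fun γ =>
      if E x γ then (WFin n γ y).image (x :: ·) else ∅

variable {E}

lemma mem_WFin : ∀ (n : ℕ) (x y : V) (L : List V), L ∈ WFin E n x y ↔
    (L.length = n + 1 ∧ L.head? = some x ∧ L.getLast? = some y ∧ L.Chain' E) := by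
  intro n
  induction n with
  | zero =>
      intro x y L
      show L ∈ (if x = y then ({[x]} : Finset (List V)) else ∅) ↔ _
      constructor
      · intro hL
        split_ifs at hL with hxy
        · have hLx : L = [x] := Finset.mem_singleton.1 hL
          subst hLx
          subst hxy
          exact ⟨rfl, rfl, by simp, by simp [List.Chain']⟩
        · simp at hL
      · rintro ⟨hlen, hhd, hlast, -⟩
        obtain ⟨a, rfl⟩ := List.length_eq_one_iff.1 hlen
        have hax : a = x := by simpa using hhd
        subst hax
        have hay : a = y := by simpa using hlast
        rw [if_pos hay]
        simp
  | succ n ih =>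
      intro x y L
      show L ∈ Finset.univ.biUnion _ ↔ _
      rw [Finset.mem_biUnion]
      constructor
      · rintro ⟨γ, -, hL⟩
        split_ifs at hL with hE
        · obtain ⟨M, hM, rfl⟩ := Finset.mem_image.1 hL
          obtain ⟨hlen, hhd, hlast, hch⟩ := (ih γ y M).1 hM
          have hMne : M ≠ [] := by
            intro hh; rw [hh] at hlen; simp at hlen
          refine ⟨by simp [hlen], rfl, ?_, ?_⟩
          · match M, hMne with
            | m :: ms, _ => rw [List.getLast?_cons_cons]; exact hlast
          · refine List.isChain_cons.2 ⟨?_, hch⟩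
            intro z hz
            rw [hhd] at hz
            have hzγ : z = γ := by have hh := hz; simp at hh; exact hh.symm
            subst hzγ
            exact hE
        · simp at hL
      · rintro ⟨hlen, hhd, hlast, hch⟩
        match L with
        | a :: M =>
            have hax : a = x := by simpa using hhd
            subst hax
            have hMlen : M.length = n + 1 := by simpa using hlen
            have hMne : M ≠ [] := by
              intro hh; rw [hh] at hMlen; simp at hMlen
            obtain ⟨b, M', rfl⟩ : ∃ b M', M = b :: M' := by
              match M, hMne with | b :: M', _ => exact ⟨b, M', rfl⟩
            refine ⟨b, Finset.mem_univ b, ?_⟩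
            have hE : E a b := (List.isChain_cons_cons.1 hch).1
            rw [if_pos hE]
            refine Finset.mem_image.2 ⟨b :: M', (ih b y _).2
              ⟨hMlen, rfl, ?_, (List.isChain_cons_cons.1 hch).2⟩, rfl⟩
            rw [← List.getLast?_cons_cons (a := a)]
            exact hlast

lemma card_WFin : ∀ (n : ℕ) (x y : V), (WFin E n x y).card = g E Finset.univ n x y := by
  intro n
  induction n with
  | zero =>
      intro x y
      show (if x = y then ({[x]} : Finset (List V)) else ∅).card = _
      rw [show g E Finset.univ 0 x y = (if x = y ∧ x ∈ Finset.univ then 1 else 0) from rfl]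
      split_ifs with h1 h2 <;> simp_all
  | succ n ih =>
      intro x y
      rw [g_first, if_pos (Finset.mem_univ x)]
      show (Finset.univ.biUnion fun γ =>
        if E x γ then (WFin E n γ y).image (x :: ·) else ∅).card = _
      rw [Finset.card_biUnion ?hdisj]
      case hdisj =>
        intro a _ b _ hab
        rw [Function.onFun, Finset.disjoint_left]
        intro p hp hp'
        split_ifs at hp hp' with h1 h2
        · obtain ⟨M, hM, hM2⟩ := Finset.mem_image.1 hp
          obtain ⟨N, hN, hN2⟩ := Finset.mem_image.1 hp'
          have e1 := ((mem_WFin n a y M).1 hM).2.1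
          have e2 := ((mem_WFin n b y N).1 hN).2.1
          have hMN : M = N := by
            have hcc := hM2.trans hN2.symm
            simpa using hcc
          rw [hMN, e2] at e1
          exact hab (Option.some_injective _ e1.symm)
        · simp at hp'
        · simp at hp
        · simp at hp
      refine Finset.sum_congr rfl fun γ _ => ?_
      split_ifs with hE
      · rw [Finset.card_image_of_injective _ (fun a b hab => by injection hab), ih]
      · simp

lemma nWalks_eq (n : ℕ) (x y : V) : nWalks E n x y = g E Finset.univ n x y := by
  rw [← card_WFin]
  have e : {L : List V // L.length = n + 1 ∧ L.head? = some x ∧ L.getLast? = some y ∧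
      L.Chain' E} ≃ {L : List V // L ∈ WFin E n x y} :=
    Equiv.subtypeEquivRight fun L => (mem_WFin n x y L).symm
  rw [show nWalks E n x y = Nat.card {L : List V // L.length = n + 1 ∧ L.head? = some x ∧
      L.getLast? = some y ∧ L.Chain' E} from rfl, Nat.card_congr e, Nat.card_eq_finsetCard]

end Stmt10

/-- Path-sum formula for closed walks: the generating function of
the numbers of closed walks from `α` to `α` on a finite quiver equals the
dressed-vertex series `F_V(α)`. -/
theorem stmt10 {V : Type} [Fintype V] [DecidableEq V] (E : V → V → Prop) (α : V) :
    PowerSeries.mk (fun n => (nWalks E n α α : ℚ)) = dressF E Finset.univ α := by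
  letI : DecidableRel E := fun a b => Classical.dec _
  have h1 : PowerSeries.mk (fun n => (nWalks E n α α : ℚ))
      = Stmt10.Gs E Finset.univ α α :=
    congrArg PowerSeries.mk (funext fun n => by rw [Stmt10.nWalks_eq])
  rw [h1, dressF]
  exact (Stmt10.main Finset.univ.card Finset.univ α (Finset.mem_univ α) le_rfl).symm
end
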